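/- arXiv:2511.05721 — 8 statements merged into one kernel-verified Lean document; each statement's English description precedes it below -/
import Mathlib

section
/- Let RRB be the full subcategory of the category of semigroups (morphisms: semigroup homomorphisms) whose objects are the right regular bands, and let AP be the full subcategory of the category of partial orders (morphisms: monotone maps) whose objects are the associative posets, i.e., the posets (P,≤) for which there exists an RRB operation · on P with x ≤ y iff x·y = x. Let U : RRB → AP be the forgetful functor sending each RRB (A,·) to its underlying associative poset (A,≤) with x ≤ y iff x·y = x, and sending each semigroup homomorphism to itself regarded as a monotone map. Then U has a left adjoint. -/
open CategoryTheory

/-- A semigroup is a right regular band when it is idempotent and satisfies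
`a·b·a = b·a`. -/
def IsRRB (S : Semigrp) : Prop :=
  (∀ x : S, x * x = x) ∧ ∀ a b : S, a * b * a = b * a

/-- The category of right regular bands: the full subcategory of the category
of semigroups whose objects are the right regular bands. -/
abbrev RRBCat := ObjectProperty.FullSubcategory IsRRB

/-- A partial order is an associative poset when there is a right regular band
operation on it whose underlying order (`x ≤ y ↔ x·y = x`) is the given
order. -/
def IsAssocPoset (P : PartOrd) : Prop :=
  ∃ _ : Semigroup P, (∀ x : P, x * x = x) ∧ (∀ a b : P, a * b * a = b * a) ∧
    ∀ x y : P, x ≤ y ↔ x * y = x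

/-- The category of associative posets: the full subcategory of the category
of partial orders whose objects are the associative posets. -/
abbrev APCat := ObjectProperty.FullSubcategory IsAssocPoset

/-- The underlying partial order of a right regular band, given by
`x ≤ y ↔ x·y = x`. -/
def rrbOrder (S : Semigrp) (h : IsRRB S) : PartialOrder S where
  le x y := x * y = x
  le_refl x := h.1 x
  le_trans x y z hxy hyz := show x * z = x by
    calc x * z = x * y * z := by rw [hxy]
    _ = x * (y * z) := mul_assoc ..
    _ = x * y := by rw [hyz]
    _ = x := hxy
  le_antisymm x y hxy hyx :=
    calc x = x * x := (h.1 x).symm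
    _ = x * y * x := by rw [hxy]
    _ = y * x := h.2 x y
    _ = y := hyx

/-- A semigroup homomorphism between right regular bands is monotone for the
underlying orders. -/
theorem mulHom_mono {S T : Semigrp} (f : S ⟶ T) (x y : ↑S) (h : x * y = x) :
    f.hom.toFun x * f.hom.toFun y = f.hom.toFun x := by
  have := f.hom.map_mul' x y
  rw [← this, h]

/-- The forgetful functor from right regular bands to associative posets: it
sends an RRB `(A,·)` to `(A,≤)` where `x ≤ y ↔ x·y = x`, and a semigroup
homomorphism to itself, regarded as a monotone map. -/
def forgetRRBtoAP : RRBCat ⥤ APCat where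
  obj S :=
    ⟨@PartOrd.of S.obj (rrbOrder S.obj S.property),
      ⟨S.obj.str, S.property.1, S.property.2, fun _ _ => Iff.rfl⟩⟩
  map {S T} f := ObjectProperty.homMk (ConcreteCategory.ofHom (C := PartOrd)
    (@OrderHom.mk S.obj T.obj (rrbOrder S.obj S.property).toPreorder
      (rrbOrder T.obj T.property).toPreorder f.hom.hom.toFun
      (fun {x y} hxy => mulHom_mono f.hom x y hxy)))

/-! ### The free right regular band on an associative poset -/

/-- Generating relations for the free RRB on a poset. -/
inductive FreeRRB.Rel (X : APCat) :
    FreeSemigroup X.obj → FreeSemigroup X.obj → Prop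
  | idem (a : FreeSemigroup X.obj) : FreeRRB.Rel X (a * a) a
  | rrb (a b : FreeSemigroup X.obj) : FreeRRB.Rel X (a * b * a) (b * a)
  | mono (x y : X.obj) : x ≤ y →
      FreeRRB.Rel X (FreeSemigroup.of x * FreeSemigroup.of y) (FreeSemigroup.of x)

/-- The congruence generated by the relations. -/
def FreeRRB.con (X : APCat) : Con (FreeSemigroup X.obj) := conGen (FreeRRB.Rel X)

/-- The free RRB object on an associative poset. -/
def FreeRRB.obj (X : APCat) : RRBCat :=
  ⟨Semigrp.of (FreeRRB.con X).Quotient,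
    ⟨fun q => Quotient.inductionOn q fun a =>
        (Con.eq _).2 (ConGen.Rel.of _ _ (FreeRRB.Rel.idem a)),
      fun q r => Quotient.inductionOn₂ q r fun a b =>
        (Con.eq _).2 (ConGen.Rel.of _ _ (FreeRRB.Rel.rrb a b))⟩⟩

noncomputable instance FreeRRB.instSemigroupQuot (X : APCat) :
    Semigroup (Quotient (FreeRRB.con X).toSetoid) :=
  inferInstanceAs (Semigroup (FreeRRB.con X).Quotient)

/-- Multiplication on the free RRB of quotient classes. -/
theorem FreeRRB.mk_mul (X : APCat) (a b : FreeSemigroup X.obj) :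
    (Quotient.mk (FreeRRB.con X).toSetoid (a * b) : ↑(FreeRRB.obj X).obj)
      = (Quotient.mk (FreeRRB.con X).toSetoid a : ↑(FreeRRB.obj X).obj)
        * (Quotient.mk (FreeRRB.con X).toSetoid b : ↑(FreeRRB.obj X).obj) :=
  Con.coe_mul a b

section
variable {X : APCat} {Y : RRBCat}

/-- Lift a monotone map to a semigroup hom on the free RRB. -/
noncomputable def FreeRRB.lift (f : X ⟶ forgetRRBtoAP.obj Y) :
    FreeRRB.obj X ⟶ Y := by
  let L : FreeSemigroup X.obj →ₙ* Y.obj := FreeSemigroup.lift (fun x => f.hom.hom.toFun x)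
  have hle : FreeRRB.con X ≤ Con.ker L := by
    apply Con.conGen_le.2
    intro a b h
    induction h with
    | idem c =>
        show L (c * c) = L c
        rw [map_mul]; exact Y.property.1 (L c)
    | rrb c d =>
        show L (c * d * c) = L (d * c)
        rw [map_mul, map_mul, map_mul]
        exact Y.property.2 (L c) (L d)
    | mono x y hxy =>
        show L (FreeSemigroup.of x * FreeSemigroup.of y) = L (FreeSemigroup.of x)
        erw [map_mul, FreeSemigroup.lift_of, FreeSemigroup.lift_of]
        exact f.hom.hom.monotone' hxy
  exact ObjectProperty.homMk (ConcreteCategory.ofHom (C := Semigrp)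
    { toFun := Quotient.lift L (fun a b h => hle h)
      map_mul' := fun q r => Quotient.inductionOn₂ q r fun a b => L.map_mul a b })

/-- The hom-set bijection. -/
noncomputable def FreeRRB.equiv (X : APCat) (Y : RRBCat) :
    (FreeRRB.obj X ⟶ Y) ≃ (X ⟶ forgetRRBtoAP.obj Y) where
  toFun φ :=
    ObjectProperty.homMk (ConcreteCategory.ofHom (C := PartOrd)
    { toFun := fun x => φ.hom.hom.toFun (Quotient.mk _ (FreeSemigroup.of x) : ↑(FreeRRB.obj X).obj)
      monotone' := by
        intro x y hxy
        show φ.hom.hom.toFun _ * φ.hom.hom.toFun _ = φ.hom.hom.toFun _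
        erw [← φ.hom.hom.map_mul']
        congr 1
        exact (Con.eq _).2 (ConGen.Rel.of _ _ (FreeRRB.Rel.mono x y hxy)) })
  invFun := FreeRRB.lift
  left_inv φ := by
    apply ObjectProperty.hom_ext
    apply Semigrp.hom_ext
    apply MulHom.ext
    intro q
    refine Quotient.inductionOn q (fun w => ?_)
    induction w using FreeSemigroup.recOnMul with
    | ih1 x => simp [FreeRRB.lift]; rfl
    | ih2 u v hu hv =>
        erw [FreeRRB.mk_mul, map_mul, map_mul, hu, hv]
  right_inv f := by
    apply ObjectProperty.hom_ext
    apply PartOrd.hom_ext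
    apply OrderHom.ext
    funext x
    show (FreeRRB.lift f).hom.hom.toFun (Quotient.mk _ (FreeSemigroup.of x)) = f.hom.hom.toFun x
    simp [FreeRRB.lift]; rfl

end

/-- The forgetful functor from the category of right regular bands to the
category of associative posets has a left adjoint. -/
theorem forgetRRBtoAP_isRightAdjoint : forgetRRBtoAP.IsRightAdjoint := by
  have he : ∀ (X : APCat) (Y Y' : RRBCat) (g : Y ⟶ Y') (h : FreeRRB.obj X ⟶ Y),
      FreeRRB.equiv X Y' (h ≫ g) = FreeRRB.equiv X Y h ≫ forgetRRBtoAP.map g := by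
    intro X Y Y' g h
    apply ObjectProperty.hom_ext
    apply PartOrd.hom_ext
    apply OrderHom.ext
    funext x
    show g.hom.hom.toFun (h.hom.hom.toFun _) = g.hom.hom.toFun (h.hom.hom.toFun _)
    rfl
  exact ⟨Adjunction.leftAdjointOfEquiv FreeRRB.equiv he,
    ⟨Adjunction.adjunctionOfEquivLeft FreeRRB.equiv he⟩⟩
end

section
/- For every cardinal κ there exists a right regular band A of cardinality at least κ that is subdirectly irreducible: there exist elements a ≠ b of A such that every semigroup congruence on A other than the identity congruence relates a and b. In particular, the variety of right regular bands is residually large. -/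
universe u

namespace RRBLarge

/-- The carrier: `Bool` (the monolith pair) ⊕ `I` (marker elements) ⊕ `I × Bool`
(the two-element right-zero classes). -/
abbrev Carrier (I : Type u) : Type u := Bool ⊕ (I ⊕ (I × Bool))

variable {I : Type u}

/-- `S s`: one of the two bottom elements forming the monolith. -/
abbrev S (s : Bool) : Carrier I := Sum.inl s

/-- `M i`: the marker element of the `i`-th class. -/
abbrev M (i : I) : Carrier I := Sum.inr (Sum.inl i)

/-- `U i s`: element `s` of the `i`-th two-element right-zero class. -/
abbrev U (i : I) (s : Bool) : Carrier I := Sum.inr (Sum.inr (i, s))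

open Classical in
/-- The multiplication of the subdirectly irreducible right regular band. -/
noncomputable def mul : Carrier I → Carrier I → Carrier I
  | _, Sum.inl s => Sum.inl s
  | _, Sum.inr (Sum.inl j) => Sum.inr (Sum.inl j)
  | Sum.inl _, Sum.inr (Sum.inr (_, s)) => Sum.inl s
  | Sum.inr (Sum.inl i), Sum.inr (Sum.inr (j, s)) =>
      if i = j then Sum.inr (Sum.inl i) else Sum.inl s
  | Sum.inr (Sum.inr (i, _)), Sum.inr (Sum.inr (j, s)) =>
      if i = j then Sum.inr (Sum.inr (j, s)) else Sum.inl s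

lemma mul_S (x : Carrier I) (s : Bool) : mul x (S s) = S s := by
  rcases x with s' | i | ⟨i, t⟩ <;> rfl

lemma mul_M (x : Carrier I) (j : I) : mul x (M j) = M j := by
  rcases x with s' | i | ⟨i, t⟩ <;> rfl

lemma S_mul_U (t : Bool) (j : I) (s : Bool) : mul (S t) (U j s) = S s := rfl

lemma M_mul_U_self (i : I) (s : Bool) : mul (M i) (U i s) = M i := by
  simp [mul, M, U]

lemma M_mul_U_ne {i j : I} (h : i ≠ j) (s : Bool) : mul (M i) (U j s) = S s := by
  simp [mul, M, U, S, h]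

lemma U_mul_U_self (i : I) (t s : Bool) : mul (U i t) (U i s) = U i s := by
  simp [mul, U]

lemma U_mul_U_ne {i j : I} (h : i ≠ j) (t s : Bool) : mul (U i t) (U j s) = S s := by
  simp [mul, U, S, h]

lemma mul_assoc' (x y z : Carrier I) : mul (mul x y) z = mul x (mul y z) := by
  rcases x with s | i | ⟨i, t⟩ <;> rcases y with s' | k | ⟨k, t'⟩ <;>
    rcases z with s'' | j | ⟨j, s''⟩ <;>
      simp only [mul] <;> split_ifs <;> simp_all [mul]

lemma mul_idem (x : Carrier I) : mul x x = x := by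
  rcases x with s | i | ⟨i, t⟩ <;> simp [mul]

lemma mul_rrb (x y : Carrier I) : mul (mul x y) x = mul y x := by
  rcases x with s | i | ⟨i, t⟩ <;> rcases y with s' | k | ⟨k, t'⟩ <;>
    simp only [mul] <;> split_ifs <;> simp_all [mul]

theorem si (r : Carrier I → Carrier I → Prop) (hEq : Equivalence r)
    (hC : ∀ x y x' y' : Carrier I, r x y → r x' y' → r (mul x x') (mul y y'))
    (hne : r ≠ (fun x y : Carrier I => x = y)) : r (S false) (S true) := by
  have mulL : ∀ (w : Carrier I) {p q}, r p q → r (mul w p) (mul w q) :=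
    fun w _ _ h => hC _ _ _ _ (hEq.refl w) h
  have mulR : ∀ (w : Carrier I) {p q}, r p q → r (mul p w) (mul q w) :=
    fun w _ _ h => hC _ _ _ _ h (hEq.refl w)
  -- from any related pair (M i, S s) we get the monolith
  have F1 : ∀ (i : I) (s : Bool), r (M i) (S s) → r (S false) (S true) := by
    intro i s h
    have h1 : r (M i) (S true) := by
      have h' := mulR (U i true) h
      rwa [M_mul_U_self, S_mul_U] at h'
    have h2 : r (M i) (S false) := by
      have h' := mulR (U i false) h
      rwa [M_mul_U_self, S_mul_U] at h'
    exact hEq.trans (hEq.symm h2) h1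
  -- from two related distinct S's we get the monolith
  have F3 : ∀ (s s' : Bool), s ≠ s' → r (S s) (S s') → r (S false) (S true) := by
    intro s s' hss h
    cases s <;> cases s'
    · exact absurd rfl hss
    · exact h
    · exact hEq.symm h
    · exact absurd rfl hss
  -- get a nontrivial related pair
  obtain ⟨p, q, hpq, hpqne⟩ : ∃ p q, r p q ∧ p ≠ q := by
    by_contra hcon
    push_neg at hcon
    apply hne
    funext x y
    exact propext ⟨fun h => hcon x y h, fun h => h ▸ hEq.refl x⟩
  clear hne
  -- main case analysis
  rcases p with s | i | ⟨i, t⟩ <;> rcases q with s' | j | ⟨j, t'⟩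
  · -- S, S
    exact F3 s s' (fun h => hpqne (congrArg Sum.inl h)) hpq
  · -- S, M
    exact F1 j s (hEq.symm hpq)
  · -- S, U : multiply by M j on the left
    have h' := mulL (M j) hpq
    rw [mul_S, show (Sum.inr (Sum.inr (j, t')) : Carrier I) = U j t' from rfl,
      M_mul_U_self] at h'
    exact F1 j s (hEq.symm h')
  · -- M, S
    exact F1 i s' hpq
  · -- M, M with i ≠ j
    have hij : i ≠ j := fun h => hpqne (congrArg (fun z => Sum.inr (Sum.inl z) : I → Carrier I) h)
    have h' := mulR (U i true) hpq
    rw [M_mul_U_self, show (Sum.inr (Sum.inl j) : Carrier I) = M j from rfl,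
      M_mul_U_ne (Ne.symm hij)] at h'
    exact F1 i true h'
  · -- M, U : multiply by S false on the left
    have h' := mulL (S false) hpq
    rw [mul_M, show (Sum.inr (Sum.inr (j, t')) : Carrier I) = U j t' from rfl,
      S_mul_U] at h'
    exact F1 i t' h'
  · -- U, S
    have h' := mulL (M i) hpq
    rw [mul_S, show (Sum.inr (Sum.inr (i, t)) : Carrier I) = U i t from rfl,
      M_mul_U_self] at h'
    exact F1 i s' h'
  · -- U, M
    have h' := mulL (S false) hpq
    rw [mul_M, show (Sum.inr (Sum.inr (i, t)) : Carrier I) = U i t from rfl,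
      S_mul_U] at h'
    exact F1 j t (hEq.symm h')
  · -- U, U
    by_cases hij : i = j
    · subst hij
      have htt : t ≠ t' := fun h => hpqne (congrArg (fun z => Sum.inr (Sum.inr (i, z)) : Bool → Carrier I) h)
      have h' := mulL (S false) hpq
      rw [show (Sum.inr (Sum.inr (i, t)) : Carrier I) = U i t from rfl,
        show (Sum.inr (Sum.inr (i, t')) : Carrier I) = U i t' from rfl,
        S_mul_U, S_mul_U] at h'
      exact F3 t t' htt h'
    · have h1 := mulR (U i true) hpq
      rw [show (Sum.inr (Sum.inr (i, t)) : Carrier I) = U i t from rfl,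
        show (Sum.inr (Sum.inr (j, t')) : Carrier I) = U j t' from rfl,
        U_mul_U_self, U_mul_U_ne (fun h => hij h.symm)] at h1
      -- h1 : r (U i true) (S true)
      have h2 := mulL (M i) h1
      rw [mul_S, M_mul_U_self] at h2
      exact F1 i true h2

end RRBLarge

/-- For every cardinal `κ` there is a right regular band of cardinality at least
`κ` which is subdirectly irreducible: some pair of distinct elements `a ≠ b` is
related by every semigroup congruence other than the identity congruence.
In particular, the variety of right regular bands is residually large. -/
theorem rrb_residually_large (κ : Cardinal.{u}) :
    ∃ (A : Type u) (_ : Semigroup A),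
      (∀ x : A, x * x = x) ∧ (∀ a b : A, a * b * a = b * a) ∧
      κ ≤ Cardinal.mk A ∧
      ∃ a b : A, a ≠ b ∧
        ∀ r : A → A → Prop, Equivalence r →
          (∀ x y x' y' : A, r x y → r x' y' → r (x * x') (y * y')) →
          r ≠ (fun x y : A => x = y) → r a b := by
  refine ⟨RRBLarge.Carrier κ.out,
    { mul := RRBLarge.mul, mul_assoc := RRBLarge.mul_assoc' }, ?_, ?_, ?_, ?_⟩
  · exact RRBLarge.mul_idem
  · exact fun a b => RRBLarge.mul_rrb a b
  · have h2 : Cardinal.mk κ.out ≤ Cardinal.mk (RRBLarge.Carrier κ.out) :=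
      Cardinal.mk_le_of_injective
        (f := fun i => (Sum.inr (Sum.inl i) : RRBLarge.Carrier κ.out))
        (by intro a b h; simpa using h)
    exact le_trans (le_of_eq (Cardinal.mk_out κ).symm) h2
  · refine ⟨RRBLarge.S false, RRBLarge.S true, by simp [RRBLarge.S], ?_⟩
    exact fun r hEq hC hne => RRBLarge.si r hEq hC hne
end

section
/- Let X be a set with two distinguished distinct elements 0 and 1. For i ∈ X let a_i : X → X be the constant map with value i; for i ∈ X with i ∉ {0,1} let b_i : X → X be the map with b_i(i) = i and b_i(j) = 0 for j ≠ i, and let c_i : X → X be the map with c_i(i) = i and c_i(j) = 1 for j ≠ i. Let A := {a_i : i ∈ X} ∪ {b_i : i ∈ X, i ∉ {0,1}} ∪ {c_i : i ∈ X, i ∉ {0,1}}, with operation f·g := g ∘ f (composition in reverse order). Then A is closed under this operation, and (A,·) is a right regular band: the operation is associative, every element is idempotent, and f·g·f = g·f for all f, g ∈ A. -/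
open Classical in
/-- The semigroup of maps from Gerhard's example: constants `a_i`, together with
`b_i` (fixing `i`, sending everything else to `0`) and `c_i` (fixing `i`,
sending everything else to `1`) for `i ∉ {0,1}`, with the operation
`f · g := g ∘ f`, is closed under the operation and forms a right regular band:
the operation is associative, every element is idempotent and `f·g·f = g·f`. -/
theorem gerhard_example_is_rrb {X : Type*} (x0 x1 : X) (h01 : x0 ≠ x1) :
    let aMap : X → X → X := fun i _ => i
    let bMap : X → X → X := fun i j => if j = i then i else x0
    let cMap : X → X → X := fun i j => if j = i then i else x1
    let A : Set (X → X) :=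
      {f | (∃ i, f = aMap i) ∨ (∃ i, i ≠ x0 ∧ i ≠ x1 ∧ f = bMap i) ∨
        (∃ i, i ≠ x0 ∧ i ≠ x1 ∧ f = cMap i)}
    let mul : (X → X) → (X → X) → (X → X) := fun f g => g ∘ f
    (∀ f ∈ A, ∀ g ∈ A, mul f g ∈ A) ∧
    (∀ f g h : X → X, mul (mul f g) h = mul f (mul g h)) ∧
    (∀ f ∈ A, mul f f = f) ∧
    (∀ f ∈ A, ∀ g ∈ A, mul (mul f g) f = mul g f) := by
  intro aMap bMap cMap A mul
  have memA : ∀ f, f ∈ A ↔ (∃ i, f = aMap i) ∨ (∃ i, i ≠ x0 ∧ i ≠ x1 ∧ f = bMap i) ∨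
      (∃ i, i ≠ x0 ∧ i ≠ x1 ∧ f = cMap i) := fun f => Iff.rfl
  refine ⟨?_, fun _ _ _ => rfl, ?_, ?_⟩
  · rintro f hf g hg
    rw [memA] at hf hg ⊢
    rcases hf with ⟨i, rfl⟩ | ⟨i, hi0, hi1, rfl⟩ | ⟨i, hi0, hi1, rfl⟩
    · exact Or.inl ⟨g i, rfl⟩
    · rcases hg with ⟨j, rfl⟩ | ⟨j, hj0, hj1, rfl⟩ | ⟨j, hj0, hj1, rfl⟩
      · exact Or.inl ⟨j, rfl⟩
      · by_cases hij : i = j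
        · subst hij
          refine Or.inr (Or.inl ⟨i, hi0, hi1, ?_⟩)
          funext x
          simp only [mul, bMap, Function.comp_apply]
          split_ifs <;> subst_vars <;> tauto
        · refine Or.inl ⟨x0, ?_⟩
          funext x
          simp only [mul, bMap, aMap, Function.comp_apply]
          split_ifs <;> subst_vars <;> tauto
      · by_cases hij : i = j
        · subst hij
          refine Or.inr (Or.inr ⟨i, hi0, hi1, ?_⟩)
          funext x
          simp only [mul, bMap, cMap, Function.comp_apply]
          split_ifs <;> subst_vars <;> tauto
        · refine Or.inl ⟨x1, ?_⟩
          funext x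
          simp only [mul, bMap, cMap, aMap, Function.comp_apply]
          split_ifs <;> subst_vars <;> tauto
    · rcases hg with ⟨j, rfl⟩ | ⟨j, hj0, hj1, rfl⟩ | ⟨j, hj0, hj1, rfl⟩
      · exact Or.inl ⟨j, rfl⟩
      · by_cases hij : i = j
        · subst hij
          refine Or.inr (Or.inl ⟨i, hi0, hi1, ?_⟩)
          funext x
          simp only [mul, bMap, cMap, Function.comp_apply]
          split_ifs <;> subst_vars <;> tauto
        · refine Or.inl ⟨x0, ?_⟩
          funext x
          simp only [mul, bMap, cMap, aMap, Function.comp_apply]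
          split_ifs <;> subst_vars <;> tauto
      · by_cases hij : i = j
        · subst hij
          refine Or.inr (Or.inr ⟨i, hi0, hi1, ?_⟩)
          funext x
          simp only [mul, cMap, Function.comp_apply]
          split_ifs <;> subst_vars <;> tauto
        · refine Or.inl ⟨x1, ?_⟩
          funext x
          simp only [mul, cMap, aMap, Function.comp_apply]
          split_ifs <;> subst_vars <;> tauto
  · rintro f hf
    rw [memA] at hf; clear memA
    rcases hf with ⟨i, rfl⟩ | ⟨i, hi0, hi1, rfl⟩ | ⟨i, hi0, hi1, rfl⟩ <;>
      funext x <;>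
      simp only [mul, aMap, bMap, cMap, Function.comp_apply] <;>
      split_ifs <;> subst_vars <;> tauto
  · rintro f hf g hg
    rw [memA] at hf hg; clear memA
    rcases hf with ⟨i, rfl⟩ | ⟨i, hi0, hi1, rfl⟩ | ⟨i, hi0, hi1, rfl⟩ <;>
      rcases hg with ⟨j, rfl⟩ | ⟨j, hj0, hj1, rfl⟩ | ⟨j, hj0, hj1, rfl⟩ <;>
      funext x <;>
      simp only [mul, aMap, bMap, cMap, Function.comp_apply] <;>
      split_ifs <;> subst_vars <;> tauto
end

section
/- Let X, the maps a_i, b_i, c_i, and the right regular band A (with operation f·g := g ∘ f) be as follows: a_i is the constant map with value i; for i ∉ {0,1}, b_i(i) = i and b_i(j) = 0 for j ≠ i, and c_i(i) = i and c_i(j) = 1 for j ≠ i; A = {a_i : i ∈ X} ∪ {b_i : i ∉ {0,1}} ∪ {c_i : i ∉ {0,1}}. Then for all i, j ∈ X with i ≠ j, the pair (a_0, a_1) belongs to the smallest semigroup congruence of A containing the pair (a_i, a_j). -/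
open Classical in
/-- In Gerhard's right regular band `A` of maps (constants `a_i`, and `b_i`,
`c_i` for `i ∉ {0,1}`, with `f·g := g ∘ f`), for any `i ≠ j` the pair
`(a_0, a_1)` belongs to the smallest semigroup congruence of `A` containing
`(a_i, a_j)`: every congruence of `A` relating `a_i` and `a_j` also relates
`a_0` and `a_1`. -/
theorem gerhard_theta_a0_a1 {X : Type*} (x0 x1 : X) (h01 : x0 ≠ x1)
    (i j : X) (hij : i ≠ j) :
    let aMap : X → X → X := fun i _ => i
    let bMap : X → X → X := fun i j => if j = i then i else x0
    let cMap : X → X → X := fun i j => if j = i then i else x1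
    let A : Set (X → X) :=
      {f | (∃ i, f = aMap i) ∨ (∃ i, i ≠ x0 ∧ i ≠ x1 ∧ f = bMap i) ∨
        (∃ i, i ≠ x0 ∧ i ≠ x1 ∧ f = cMap i)}
    let mul : (X → X) → (X → X) → (X → X) := fun f g => g ∘ f
    ∀ r : (X → X) → (X → X) → Prop,
      (∀ f ∈ A, r f f) →
      (∀ f ∈ A, ∀ g ∈ A, r f g → r g f) →
      (∀ f ∈ A, ∀ g ∈ A, ∀ h ∈ A, r f g → r g h → r f h) →
      (∀ f ∈ A, ∀ g ∈ A, ∀ f' ∈ A, ∀ g' ∈ A,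
        r f g → r f' g' → r (mul f f') (mul g g')) →
      r (aMap i) (aMap j) → r (aMap x0) (aMap x1) := by

  intro aMap bMap cMap A mul r hrefl hsymm htrans hmul hr
  have memA : ∀ k : X, aMap k ∈ A := fun k => Or.inl ⟨k, rfl⟩
  have memB : ∀ k : X, k ≠ x0 → k ≠ x1 → bMap k ∈ A :=
    fun k h0 h1 => Or.inr (Or.inl ⟨k, h0, h1, rfl⟩)
  have memC : ∀ k : X, k ≠ x0 → k ≠ x1 → cMap k ∈ A :=
    fun k h0 h1 => Or.inr (Or.inr ⟨k, h0, h1, rfl⟩)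
  -- key: apply any f ∈ A on the right
  have key : ∀ f ∈ A, r (aMap (f i)) (aMap (f j)) := by
    intro f hf
    have := hmul (aMap i) (memA i) (aMap j) (memA j) f hf f hf hr (hrefl f hf)
    exact this
  -- helper: if k ∉ {x0,x1} and k ≠ m, then congruence of (a_k, a_m) side
  have main : ∀ k : X, k ≠ x0 → k ≠ x1 →
      r (aMap (bMap k i)) (aMap (bMap k j)) ∧ r (aMap (cMap k i)) (aMap (cMap k j)) :=
    fun k h0 h1 => ⟨key _ (memB k h0 h1), key _ (memC k h0 h1)⟩
  by_cases hi0 : i = x0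
  · by_cases hj1 : j = x1
    · subst hi0 hj1; exact hr
    · -- j ∉ {x0,x1}: j ≠ x0 since i = x0 and i ≠ j
      have hj0 : j ≠ x0 := fun h => hij (hi0.trans h.symm)
      obtain ⟨hb, hc⟩ := main j hj0 hj1
      simp only [bMap, cMap, if_pos rfl, if_neg (fun h : i = j => hij h)] at hb hc
      rw [hi0] at hij
      -- hb : r (aMap x0) (aMap j), hc : r (aMap x1) (aMap j)
      exact htrans _ (memA x0) _ (memA j) _ (memA x1) hb
        (hsymm _ (memA x1) _ (memA j) hc)
  · by_cases hi1 : i = x1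
    · -- i = x1
      by_cases hj0 : j = x0
      · subst hi1 hj0
        exact hsymm _ (memA i) _ (memA j) hr
      · have hj1 : j ≠ x1 := fun h => hij (hi1.trans h.symm)
        obtain ⟨hb, hc⟩ := main j hj0 hj1
        simp only [bMap, cMap, if_pos rfl, if_neg (fun h : i = j => hij h)] at hb hc
        exact htrans _ (memA x0) _ (memA j) _ (memA x1) hb
          (hsymm _ (memA x1) _ (memA j) hc)
    · -- i ∉ {x0,x1}
      obtain ⟨hb, hc⟩ := main i hi0 hi1
      simp only [bMap, cMap, if_pos rfl, if_neg (fun h : j = i => hij h.symm)] at hb hc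
      -- hb : r (aMap i) (aMap x0), hc : r (aMap i) (aMap x1)
      exact htrans _ (memA x0) _ (memA i) _ (memA x1)
        (hsymm _ (memA i) _ (memA x0) hb) hc
end

section
/- Let A be a right regular band, c ∈ A a central element, and I1, I2 subsemigroups of A with A = I1 ×_c I2. If x1 ∈ I1, x2 ∈ I2 and both x = ⟨⟨x1,x2⟩⟩_c and x' = ⟨⟨x1,x2⟩⟩_c, then x = x'. -/
namespace RRBFactor

variable {A : Type*} [Semigroup A]

/-- The underlying order of a right regular band: `x ≤ y ↔ x·y = x`. -/
def rle (x y : A) : Prop := x * y = x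

/-- `s` is the least upper bound of `{a, b}` with respect to the underlying
order of a right regular band. -/
def IsLub2 (a b s : A) : Prop :=
  rle a s ∧ rle b s ∧ ∀ t : A, rle a t → rle b t → rle s t

/-- `IsPair c x1 x2 x` expresses `x = ⟨⟨x1,x2⟩⟩_c`: the conjunction of
(comm), (dist), (p1), (p2) and (prod). -/
def IsPair (c x1 x2 x : A) : Prop :=
  (x * x1 = x1 * x ∧ x * x2 = x2 * x) ∧
  IsLub2 (x * x1) (x * x2) x ∧
  IsLub2 (x * x1) (c * x1) x1 ∧
  IsLub2 (x * x2) (c * x2) x2 ∧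
  x1 * x2 = x * c

/-- A subset is a subsemigroup when it is closed under multiplication. -/
def MulClosed (I : Set A) : Prop := ∀ a ∈ I, ∀ b ∈ I, a * b ∈ I

/-- `CDirect c I1 I2` expresses `A = I1 ×_c I2`: the conjunction of (Perm),
(Mod1), (Mod2), (Abs) (in both symmetric forms), (Exi) and (Onto). -/
def CDirect (c : A) (I1 I2 : Set A) : Prop :=
  -- (Perm)
  (∀ x1 ∈ I1, ∀ x2 ∈ I2, x1 * x2 = x2 * x1) ∧
  -- (Mod1)
  (∀ x y : A, ∀ x1 ∈ I1, ∀ x2 ∈ I2, rle (x * c) (x1 * x2) →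
    ∀ s : A, IsLub2 (x * x1) (x * x2) s →
      IsLub2 (x * x1 * y) (x * x2 * y) (s * y) ∧
      IsLub2 (y * x * x1) (y * x * x2) (y * s)) ∧
  -- (Mod2)
  (∀ x y : A, ∀ x1 ∈ I1, ∀ x2 ∈ I2, rle (x1 * x2) x →
    (∀ s : A, IsLub2 (x * x1) (c * x1) s →
      IsLub2 (x * x1 * y) (c * x1 * y) (s * y) ∧
      IsLub2 (y * x * x1) (y * c * x1) (y * s)) ∧
    (∀ s : A, IsLub2 (x * x2) (c * x2) s →
      IsLub2 (x * x2 * y) (c * x2 * y) (s * y) ∧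
      IsLub2 (y * x * x2) (y * c * x2) (y * s))) ∧
  -- (Abs)
  (∀ x1 ∈ I1, ∀ y1 ∈ I1, ∀ z2 ∈ I2, ∀ s : A,
      (IsLub2 x1 (y1 * z2) s ↔ IsLub2 x1 (y1 * c) s)) ∧
  (∀ x2 ∈ I2, ∀ y2 ∈ I2, ∀ z1 ∈ I1, ∀ s : A,
      (IsLub2 x2 (y2 * z1) s ↔ IsLub2 x2 (y2 * c) s)) ∧
  -- (Exi)
  (∀ x1 ∈ I1, ∀ x2 ∈ I2, ∃ x : A, IsPair c x1 x2 x) ∧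
  -- (Onto)
  (∀ x : A, ∃ x1 ∈ I1, ∃ x2 ∈ I2, IsPair c x1 x2 x)

end RRBFactor

open RRBFactor

private lemma rrb_rle_of_lub {A : Type*} [Semigroup A]
    (idem : ∀ x : A, x * x = x) (rrb : ∀ a b : A, a * b * a = b * a)
    (c : A) (hc : ∀ x : A, c * x = x * c)
    (x xi x' : A) (hcx : c * x = c * x')
    (hcomm : x * xi = xi * x) (hcomm' : x' * xi = xi * x')
    (hlub : IsLub2 (x * x' * xi) (x * c * xi) (x * xi)) :
    rle (x * xi) x' := by
  apply hlub.2.2 x'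
  · show x * x' * xi * x' = x * x' * xi
    have e1 : x * x' * xi = x * xi * x' := by
      rw [mul_assoc, hcomm', ← mul_assoc]
    rw [e1, mul_assoc (x * xi), idem]
  · show x * c * xi * x' = x * c * xi
    have ea : c * xi * x' = c * xi * x := by
      rw [mul_assoc, ← hcomm', ← mul_assoc, ← hcx, mul_assoc, hcomm, ← mul_assoc]
    have eb : x * c * xi * x = x * c * xi := by
      calc x * c * xi * x = x * c * (xi * x) := by rw [mul_assoc (x * c)]
        _ = x * c * (x * xi) := by rw [hcomm]
        _ = x * c * x * xi := by rw [← mul_assoc]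
        _ = c * x * xi := by rw [rrb x c]
        _ = x * c * xi := by rw [hc]
    calc x * c * xi * x' = x * (c * xi * x') := by
          rw [mul_assoc, mul_assoc, mul_assoc]
      _ = x * (c * xi * x) := by rw [ea]
      _ = x * c * xi * x := by rw [mul_assoc, mul_assoc, mul_assoc]
      _ = x * c * xi := eb


/-- If `A = I1 ×_c I2` for a central element `c` of a right regular band `A`,
then for `x1 ∈ I1`, `x2 ∈ I2`, the element `x` with `x = ⟨⟨x1,x2⟩⟩_c` is
unique. -/
theorem rrb_pair_unique {A : Type*} [Semigroup A]
    (idem : ∀ x : A, x * x = x) (rrb : ∀ a b : A, a * b * a = b * a)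
    (c : A) (hc : ∀ x : A, c * x = x * c)
    (I1 I2 : Set A) (hI1 : MulClosed I1) (hI2 : MulClosed I2)
    (hdp : CDirect c I1 I2)
    (x1 x2 x x' : A) (hx1 : x1 ∈ I1) (hx2 : x2 ∈ I2)
    (h : IsPair c x1 x2 x) (h' : IsPair c x1 x2 x') :
    x = x' := by
  obtain ⟨hPerm, hMod1, hMod2, _⟩ := hdp
  obtain ⟨⟨hc1, hc2⟩, hdist, hp1, hp2, hprod⟩ := h
  obtain ⟨⟨hc1', hc2'⟩, hdist', hp1', hp2', hprod'⟩ := h'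
  have hcx : c * x = c * x' := by rw [hc, hc, ← hprod, ← hprod']
  have hrle : ∀ z : A, x1 * x2 = z * c → rle (x1 * x2) z := by
    intro z hz
    show x1 * x2 * z = x1 * x2
    rw [hz, mul_assoc, ← hc, ← mul_assoc, rrb]
  have hr : rle (x1 * x2) x := hrle x hprod
  have hr' : rle (x1 * x2) x' := hrle x' hprod'
  obtain ⟨H1, H2⟩ := hMod2 x' x x1 hx1 x2 hx2 hr'
  have hl1 : IsLub2 (x * x' * x1) (x * c * x1) (x * x1) := (H1 x1 hp1').2
  have hl2 : IsLub2 (x * x' * x2) (x * c * x2) (x * x2) := (H2 x2 hp2').2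
  obtain ⟨H1', H2'⟩ := hMod2 x x' x1 hx1 x2 hx2 hr
  have hl1' : IsLub2 (x' * x * x1) (x' * c * x1) (x' * x1) := (H1' x1 hp1).2
  have hl2' : IsLub2 (x' * x * x2) (x' * c * x2) (x' * x2) := (H2' x2 hp2).2
  have hle1 : rle (x * x1) x' := rrb_rle_of_lub idem rrb c hc x x1 x' hcx hc1 hc1' hl1
  have hle2 : rle (x * x2) x' := rrb_rle_of_lub idem rrb c hc x x2 x' hcx hc2 hc2' hl2
  have hle1' : rle (x' * x1) x := rrb_rle_of_lub idem rrb c hc x' x1 x hcx.symm hc1' hc1 hl1'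
  have hle2' : rle (x' * x2) x := rrb_rle_of_lub idem rrb c hc x' x2 x hcx.symm hc2' hc2 hl2'
  have hxx' : x * x' = x := hdist.2.2 x' hle1 hle2
  have hx'x : x' * x = x' := hdist'.2.2 x hle1' hle2'
  calc x = x * x' * x := by rw [hxx', idem]
    _ = x' * x := rrb x x'
    _ = x' := hx'x
end

section
/- Let A be a right regular band, c ∈ A a central element, and I1, I2 subsemigroups of A with A = I1 ×_c I2. If x ∈ A satisfies x = ⟨⟨x1,x2⟩⟩_c and x = ⟨⟨y1,y2⟩⟩_c with x1, y1 ∈ I1 and x2, y2 ∈ I2, then x1 = y1 and x2 = y2. -/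
open RRBFactor

/-- If `A = I1 ×_c I2` for a central element `c` of a right regular band `A`,
and `x = ⟨⟨x1,x2⟩⟩_c = ⟨⟨y1,y2⟩⟩_c` with `x1, y1 ∈ I1` and `x2, y2 ∈ I2`, then
`x1 = y1` and `x2 = y2`. -/
theorem rrb_pair_coords_unique {A : Type*} [Semigroup A]
    (idem : ∀ x : A, x * x = x) (rrb : ∀ a b : A, a * b * a = b * a)
    (c : A) (hc : ∀ x : A, c * x = x * c)
    (I1 I2 : Set A) (hI1 : MulClosed I1) (hI2 : MulClosed I2)
    (hdp : CDirect c I1 I2)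
    (x x1 x2 y1 y2 : A) (hx1 : x1 ∈ I1) (hy1 : y1 ∈ I1)
    (hx2 : x2 ∈ I2) (hy2 : y2 ∈ I2)
    (h : IsPair c x1 x2 x) (h' : IsPair c y1 y2 x) :
    x1 = y1 ∧ x2 = y2 := by
  simp only [IsPair, IsLub2, rle] at h h'
  simp only [CDirect, IsLub2, rle] at hdp
  obtain ⟨⟨hc1, hc2⟩, hdist, hp1, hp2, hprod⟩ := h
  obtain ⟨⟨hc1', hc2'⟩, hdist', hp1', hp2', hprod'⟩ := h'
  obtain ⟨perm, mod1, -, abs1, abs2, -, -⟩ := hdp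
  -- basic order facts
  have f0 : ∀ a b : A, a * b * b = a * b := by
    intro a b; rw [mul_assoc, idem]
  have ranti : ∀ {a b : A}, a * b = a → b * a = b → a = b := by
    intro a b hab hba
    calc a = a * b := hab.symm
      _ = a * (b * a) := by rw [hba]
      _ = a * b * a := by rw [mul_assoc]
      _ = b * a := rrb a b
      _ = b := hba
  have hxcx : x * c * x = x * c := by
    calc x * c * x = x * (c * x) := mul_assoc ..
      _ = x * (x * c) := by rw [hc x]
      _ = x * x * c := (mul_assoc ..).symm
      _ = x * c := by rw [idem x]
  have hpp : x * c * (x * c) = x * c := by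
    calc x * c * (x * c) = x * c * x * c := (mul_assoc ..).symm
      _ = x * c * c := by rw [hxcx]
      _ = x * (c * c) := mul_assoc ..
      _ = x * c := by rw [idem c]
  have hxp : x * (x * c) = x * c := by rw [← mul_assoc, idem x]
  have hpx1 : x * c * x1 = x * c := by
    rw [← hprod, rrb x1 x2]; exact (perm x1 hx1 x2 hx2).symm
  have hpx2 : x * c * x2 = x * c := by
    rw [← hprod, mul_assoc, idem x2]
  have hpy1 : x * c * y1 = x * c := by
    rw [← hprod', rrb y1 y2]; exact (perm y1 hy1 y2 hy2).symm
  have hpy2 : x * c * y2 = x * c := by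
    rw [← hprod', mul_assoc, idem y2]
  have hy2p : y2 * (x * c) = x * c := by
    calc y2 * (x * c) = y2 * x * c := (mul_assoc ..).symm
      _ = x * y2 * c := by rw [← hc2']
      _ = x * (y2 * c) := mul_assoc ..
      _ = x * (c * y2) := by rw [← hc y2]
      _ = x * c * y2 := (mul_assoc ..).symm
      _ = x * c := hpy2
  have hx2p : x2 * (x * c) = x * c := by
    calc x2 * (x * c) = x2 * x * c := (mul_assoc ..).symm
      _ = x * x2 * c := by rw [← hc2]
      _ = x * (x2 * c) := mul_assoc ..
      _ = x * (c * x2) := by rw [← hc x2]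
      _ = x * c * x2 := (mul_assoc ..).symm
      _ = x * c := hpx2
  -- lub of {a, b} is a itself when b ≤ a
  have lub_self : ∀ {a b : A}, b * a = b →
      (a * a = a ∧ b * a = b ∧ ∀ t : A, a * t = a → b * t = b → a * t = a) :=
    fun hba => ⟨idem _, hba, fun _ hat _ => hat⟩
  -- cross products equal x*c, via (Abs)
  have h1 : (x2 * x2 = x2 ∧ y2 * y1 * x2 = y2 * y1 ∧ _) := lub_self (by
    have e : y2 * y1 = x * c := (perm y1 hy1 y2 hy2).symm.trans hprod'
    rw [e]; exact hpx2)
  have h2 := (abs2 x2 hx2 y2 hy2 y1 hy1 x2).mp h1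
  have h3 := (abs2 x2 hx2 y2 hy2 x1 hx1 x2).mpr h2
  have hy2x1 : y2 * x1 = x * c := by
    calc y2 * x1 = y2 * x1 * x2 := h3.2.1.symm
      _ = y2 * (x1 * x2) := mul_assoc ..
      _ = y2 * (x * c) := by rw [hprod]
      _ = x * c := hy2p
  have hx1y2 : x1 * y2 = x * c := (perm x1 hx1 y2 hy2).trans hy2x1
  have h1' : (y2 * y2 = y2 ∧ x2 * x1 * y2 = x2 * x1 ∧ _) := lub_self (by
    have e : x2 * x1 = x * c := (perm x1 hx1 x2 hx2).symm.trans hprod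
    rw [e]; exact hpy2)
  have h2' := (abs2 y2 hy2 x2 hx2 x1 hx1 y2).mp h1'
  have h3' := (abs2 y2 hy2 x2 hx2 y1 hy1 y2).mpr h2'
  have hx2y1 : x2 * y1 = x * c := by
    calc x2 * y1 = x2 * y1 * y2 := h3'.2.1.symm
      _ = x2 * (y1 * y2) := mul_assoc ..
      _ = x2 * (x * c) := by rw [hprod']
      _ = x * c := hx2p
  have hy1x2 : y1 * x2 = x * c := (perm y1 hy1 x2 hx2).trans hx2y1
  have hy2c_x2 : y2 * c * x2 = y2 * c := h2.2.1
  have hx2c_y2 : x2 * c * y2 = x2 * c := h2'.2.1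
  -- c-parts in I1 direction
  have g1 : (y1 * y1 = y1 ∧ x1 * x2 * y1 = x1 * x2 ∧ _) :=
    lub_self (by rw [hprod]; exact hpy1)
  have hx1c_y1 : x1 * c * y1 = x1 * c :=
    ((abs1 y1 hy1 x1 hx1 x2 hx2 y1).mp g1).2.1
  have g1' : (x1 * x1 = x1 ∧ y1 * y2 * x1 = y1 * y2 ∧ _) :=
    lub_self (by rw [hprod']; exact hpx1)
  have hy1c_x1 : y1 * c * x1 = y1 * c :=
    ((abs1 x1 hx1 y1 hy1 y2 hy2 x1).mp g1').2.1
  -- Mod1 hypotheses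
  have hle_pc : x * c * (y1 * y2) = x * c := by rw [hprod']; exact hpp
  have hle_pc' : x * c * (x1 * x2) = x * c := by rw [hprod]; exact hpp
  -- x1 ≤ y1
  have L1 := (mod1 x x1 y1 hy1 y2 hy2 hle_pc x hdist').2
  have hx1x_y1 : x1 * x * y1 = x1 * x := by
    apply L1.2.2 y1 (f0 (x1 * x) y1)
    have e : x1 * x * y2 = x * c := by
      calc x1 * x * y2 = x * x1 * y2 := by rw [← hc1]
        _ = x * (x1 * y2) := mul_assoc ..
        _ = x * (x * c) := by rw [hx1y2]
        _ = x * c := hxp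
    rw [e]; exact hpy1
  have hx1y1 : x1 * y1 = x1 := by
    apply hp1.2.2 y1
    · rw [hc1]; exact hx1x_y1
    · rw [hc x1]; exact hx1c_y1
  -- y1 ≤ x1
  have L1' := (mod1 x y1 x1 hx1 x2 hx2 hle_pc' x hdist).2
  have hy1x_x1 : y1 * x * x1 = y1 * x := by
    apply L1'.2.2 x1 (f0 (y1 * x) x1)
    have e : y1 * x * x2 = x * c := by
      calc y1 * x * x2 = x * y1 * x2 := by rw [← hc1']
        _ = x * (y1 * x2) := mul_assoc ..
        _ = x * (x * c) := by rw [hy1x2]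
        _ = x * c := hxp
    rw [e]; exact hpx1
  have hy1x1 : y1 * x1 = y1 := by
    apply hp1'.2.2 x1
    · rw [hc1']; exact hy1x_x1
    · rw [hc y1]; exact hy1c_x1
  -- x2 ≤ y2
  have L2 := (mod1 x x2 y1 hy1 y2 hy2 hle_pc x hdist').2
  have hx2x_y2 : x2 * x * y2 = x2 * x := by
    refine L2.2.2 y2 ?_ (f0 (x2 * x) y2)
    have e : x2 * x * y1 = x * c := by
      calc x2 * x * y1 = x * x2 * y1 := by rw [← hc2]
        _ = x * (x2 * y1) := mul_assoc ..
        _ = x * (x * c) := by rw [hx2y1]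
        _ = x * c := hxp
    rw [e]; exact hpy2
  have hx2y2 : x2 * y2 = x2 := by
    apply hp2.2.2 y2
    · rw [hc2]; exact hx2x_y2
    · rw [hc x2]; exact hx2c_y2
  -- y2 ≤ x2
  have L2' := (mod1 x y2 x1 hx1 x2 hx2 hle_pc' x hdist).2
  have hy2x_x2 : y2 * x * x2 = y2 * x := by
    refine L2'.2.2 x2 ?_ (f0 (y2 * x) x2)
    have e : y2 * x * x1 = x * c := by
      calc y2 * x * x1 = x * y2 * x1 := by rw [← hc2']
        _ = x * (y2 * x1) := mul_assoc ..
        _ = x * (x * c) := by rw [hy2x1]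
        _ = x * c := hxp
    rw [e]; exact hpx2
  have hy2x2 : y2 * x2 = y2 := by
    apply hp2'.2.2 x2
    · rw [hc2']; exact hy2x_x2
    · rw [hc y2]; exact hy2c_x2
  exact ⟨ranti hx1y1 hy1x1, ranti hx2y2 hy2x2⟩
end

section
/- Let A be a right regular band, c ∈ A a central element, and I1, I2 subsemigroups of A with A = I1 ×_c I2. If x = ⟨⟨x1,x2⟩⟩_c and z = ⟨⟨z1,z2⟩⟩_c with x1, z1 ∈ I1 and x2, z2 ∈ I2, then x·z = ⟨⟨x1·z1, x2·z2⟩⟩_c. -/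
open RRBFactor

set_option maxHeartbeats 2000000 in
/-- If `A = I1 ×_c I2` for a central element `c` of a right regular band `A`,
and `x = ⟨⟨x1,x2⟩⟩_c`, `z = ⟨⟨z1,z2⟩⟩_c` with `x1, z1 ∈ I1`, `x2, z2 ∈ I2`,
then `x·z = ⟨⟨x1·z1, x2·z2⟩⟩_c`. -/
theorem rrb_pair_mul {A : Type*} [Semigroup A]
    (idem : ∀ x : A, x * x = x) (rrb : ∀ a b : A, a * b * a = b * a)
    (c : A) (hc : ∀ x : A, c * x = x * c)
    (I1 I2 : Set A) (hI1 : MulClosed I1) (hI2 : MulClosed I2)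
    (hdp : CDirect c I1 I2)
    (x x1 x2 z z1 z2 : A) (hx1 : x1 ∈ I1) (hz1 : z1 ∈ I1)
    (hx2 : x2 ∈ I2) (hz2 : z2 ∈ I2)
    (hx : IsPair c x1 x2 x) (hz : IsPair c z1 z2 z) :
    IsPair c (x1 * z1) (x2 * z2) (x * z) := by
  obtain ⟨hPerm, hMod1, hMod2, _hAbs1, _hAbs2, hExi, _hOnto⟩ := hdp
  obtain ⟨⟨_hcx1, _hcx2⟩, hdx, hp1x, hp2x, hprx⟩ := hx
  obtain ⟨⟨hcz1, hcz2⟩, hdz, hp1z, hp2z, hprz⟩ := hz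
  -- basic helpers
  have rrbE : ∀ a b : A, a * (b * a) = b * a := fun a b => by
    rw [← mul_assoc]; exact rrb a b
  have rrbT : ∀ a b t : A, a * (b * (a * t)) = b * (a * t) := fun a b t => by
    calc a * (b * (a * t)) = (a * (b * a)) * t := by simp only [mul_assoc]
      _ = (b * a) * t := by rw [rrbE]
      _ = b * (a * t) := mul_assoc ..
  have idemT : ∀ a t : A, a * (a * t) = a * t := fun a t => by
    rw [← mul_assoc, idem]
  have rle_trans : ∀ {a b d : A}, rle a b → rle b d → rle a d := by
    intro a b d h1 h2
    show a * d = a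
    calc a * d = (a * b) * d := by rw [(h1 : a * b = a)]
      _ = a * (b * d) := mul_assoc ..
      _ = a * b := by rw [(h2 : b * d = b)]
      _ = a := h1
  have antisym : ∀ {a b : A}, rle a b → rle b a → a = b := by
    intro a b h1 h2
    calc a = a * b := (h1 : a * b = a).symm
      _ = a * (b * a) := by rw [(h2 : b * a = b)]
      _ = b * a := rrbE a b
      _ = b := h2
  have lub_uniq : ∀ {a b s s' : A}, IsLub2 a b s → IsLub2 a b s' → s = s' :=
    fun h h' => antisym (h.2.2 _ h'.1 h'.2.1) (h'.2.2 _ h.1 h.2.1)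
  have lubconv : ∀ {a a' b b' s s' : A}, IsLub2 a b s → a = a' → b = b' → s = s' →
      IsLub2 a' b' s' := by
    intro a a' b b' s s' h e1 e2 e3
    subst e1; subst e2; subst e3; exact h
  -- Perm instances
  have pz1z2 : z1 * z2 = z2 * z1 := hPerm z1 hz1 z2 hz2
  have px1x2 : x1 * x2 = x2 * x1 := hPerm x1 hx1 x2 hx2
  have pz1x2 : z1 * x2 = x2 * z1 := hPerm z1 hz1 x2 hx2
  have px1z2 : x1 * z2 = z2 * x1 := hPerm x1 hx1 z2 hz2
  -- side conditions
  have acac : ∀ a : A, (a * c) * (a * c) = a * c := fun a => by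
    calc (a*c)*(a*c) = a*(c*(a*c)) := mul_assoc ..
      _ = a*((a*c)*c) := by rw [hc (a*c)]
      _ = a*(a*(c*c)) := by rw [mul_assoc a c c]
      _ = a*(a*c) := by rw [idem c]
      _ = a*c := idemT a c
  have hszx : rle (z1*z2) z := by
    show (z1*z2)*z = z1*z2
    rw [hprz]
    calc (z*c)*z = z*(c*z) := mul_assoc ..
      _ = z*(z*c) := by rw [hc z]
      _ = z*c := idemT z c
  have hsxx : rle (x1*x2) x := by
    show (x1*x2)*x = x1*x2
    rw [hprx]
    calc (x*c)*x = x*(c*x) := mul_assoc ..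
      _ = x*(x*c) := by rw [hc x]
      _ = x*c := idemT x c
  have hm1x : rle (x*c) (x1*x2) := by
    show (x*c)*(x1*x2) = x*c
    rw [hprx]; exact acac x
  have hm1z : rle (z*c) (z1*z2) := by
    show (z*c)*(z1*z2) = z*c
    rw [hprz]; exact acac z
  -- c-absorption facts
  have Ec1 : z*(c*z1) = z*c := by
    calc z*(c*z1) = (z*c)*z1 := (mul_assoc z c z1).symm
      _ = (z1*z2)*z1 := by rw [← hprz]
      _ = z1*(z2*z1) := mul_assoc ..
      _ = z2*z1 := rrbE z1 z2
      _ = z1*z2 := pz1z2.symm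
      _ = z*c := hprz
  have Ec2 : z*(c*z2) = z*c := by
    calc z*(c*z2) = (z*c)*z2 := (mul_assoc z c z2).symm
      _ = (z1*z2)*z2 := by rw [← hprz]
      _ = z1*(z2*z2) := mul_assoc ..
      _ = z1*z2 := by rw [idem z2]
      _ = z*c := hprz
  have GEN1 : ∀ u : A, (u*(z*c))*(u*(z*z1)) = u*(z*c) := fun u => by
    calc (u*(z*c))*(u*(z*z1)) = u*((z*c)*(u*(z*z1))) := mul_assoc ..
      _ = (z*c)*(u*(z*z1)) := rrbT u (z*c) (z*z1)
      _ = z*(c*(u*(z*z1))) := mul_assoc ..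
      _ = z*((c*u)*(z*z1)) := by rw [← mul_assoc c u (z*z1)]
      _ = (c*u)*(z*z1) := rrbT z (c*u) z1
      _ = c*(u*(z*z1)) := mul_assoc ..
      _ = (u*(z*z1))*c := hc _
      _ = u*(z*(z1*c)) := by simp only [mul_assoc]
      _ = u*(z*(c*z1)) := by rw [← hc z1]
      _ = u*(z*c) := by rw [Ec1]
  have GEN2 : ∀ u : A, (u*(z*c))*(u*(z*z2)) = u*(z*c) := fun u => by
    calc (u*(z*c))*(u*(z*z2)) = u*((z*c)*(u*(z*z2))) := mul_assoc ..
      _ = (z*c)*(u*(z*z2)) := rrbT u (z*c) (z*z2)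
      _ = z*(c*(u*(z*z2))) := mul_assoc ..
      _ = z*((c*u)*(z*z2)) := by rw [← mul_assoc c u (z*z2)]
      _ = (c*u)*(z*z2) := rrbT z (c*u) z2
      _ = c*(u*(z*z2)) := mul_assoc ..
      _ = (u*(z*z2))*c := hc _
      _ = u*(z*(z2*c)) := by simp only [mul_assoc]
      _ = u*(z*(c*z2)) := by rw [← hc z2]
      _ = u*(z*c) := by rw [Ec2]
  -- K0 commutation identities
  have K0z1 : ∀ u1, u1 ∈ I1 → z*(u1*z1) = u1*(z*z1) := by
    intro u1 hu1
    have h := ((hMod2 z (z*u1) z1 hz1 z2 hz2 hszx).1 z1 hp1z).2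
    have ca : (z*u1)*z*z1 = u1*(z*z1) := by
      calc (z*u1)*z*z1 = (z*(u1*z))*z1 := by rw [mul_assoc z u1 z]
        _ = (u1*z)*z1 := by rw [rrbE z u1]
        _ = u1*(z*z1) := mul_assoc ..
    have cb : (z*u1)*c*z1 = u1*(z*c) := by
      calc (z*u1)*c*z1 = (z*(u1*c))*z1 := by rw [mul_assoc z u1 c]
        _ = (z*(c*u1))*z1 := by rw [← hc u1]
        _ = ((z*c)*u1)*z1 := by rw [← mul_assoc z c u1]
        _ = ((z1*z2)*u1)*z1 := by rw [← hprz]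
        _ = (z1*(z2*u1))*z1 := by rw [mul_assoc z1 z2 u1]
        _ = (z1*(u1*z2))*z1 := by rw [← hPerm u1 hu1 z2 hz2]
        _ = z1*((u1*z2)*z1) := mul_assoc ..
        _ = z1*(u1*(z2*z1)) := by rw [mul_assoc u1 z2 z1]
        _ = z1*(u1*(z1*z2)) := by rw [← pz1z2]
        _ = z1*((u1*z1)*z2) := by rw [← mul_assoc u1 z1 z2]
        _ = (z1*(u1*z1))*z2 := by rw [← mul_assoc z1 (u1*z1) z2]
        _ = (u1*z1)*z2 := by rw [rrbE z1 u1]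
        _ = u1*(z1*z2) := mul_assoc ..
        _ = u1*(z*c) := by rw [hprz]
    have cs : (z*u1)*z1 = z*(u1*z1) := mul_assoc ..
    have L : IsLub2 (u1*(z*z1)) (u1*(z*c)) (z*(u1*z1)) := lubconv h ca cb cs
    have R : IsLub2 (u1*(z*z1)) (u1*(z*c)) (u1*(z*z1)) :=
      ⟨idem _, GEN1 u1, fun t h1 _ => h1⟩
    exact lub_uniq L R
  have K0z2 : ∀ u2, u2 ∈ I2 → z*(u2*z2) = u2*(z*z2) := by
    intro u2 hu2
    have h := ((hMod2 z (z*u2) z1 hz1 z2 hz2 hszx).2 z2 hp2z).2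
    have ca : (z*u2)*z*z2 = u2*(z*z2) := by
      calc (z*u2)*z*z2 = (z*(u2*z))*z2 := by rw [mul_assoc z u2 z]
        _ = (u2*z)*z2 := by rw [rrbE z u2]
        _ = u2*(z*z2) := mul_assoc ..
    have cb : (z*u2)*c*z2 = u2*(z*c) := by
      calc (z*u2)*c*z2 = (z*(u2*c))*z2 := by rw [mul_assoc z u2 c]
        _ = (z*(c*u2))*z2 := by rw [← hc u2]
        _ = ((z*c)*u2)*z2 := by rw [← mul_assoc z c u2]
        _ = ((z1*z2)*u2)*z2 := by rw [← hprz]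
        _ = (z1*(z2*u2))*z2 := by rw [mul_assoc z1 z2 u2]
        _ = z1*((z2*u2)*z2) := mul_assoc ..
        _ = z1*(z2*(u2*z2)) := by rw [mul_assoc z2 u2 z2]
        _ = z1*(u2*z2) := by rw [rrbE z2 u2]
        _ = (z1*u2)*z2 := (mul_assoc ..).symm
        _ = (u2*z1)*z2 := by rw [hPerm z1 hz1 u2 hu2]
        _ = u2*(z1*z2) := mul_assoc ..
        _ = u2*(z*c) := by rw [hprz]
    have cs : (z*u2)*z2 = z*(u2*z2) := mul_assoc ..
    have L : IsLub2 (u2*(z*z2)) (u2*(z*c)) (z*(u2*z2)) := lubconv h ca cb cs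
    have R : IsLub2 (u2*(z*z2)) (u2*(z*c)) (u2*(z*z2)) :=
      ⟨idem _, GEN2 u2, fun t h1 _ => h1⟩
    exact lub_uniq L R
  have K1 : (x*z)*(x1*z1) = x*(x1*(z*z1)) := by
    calc (x*z)*(x1*z1) = x*(z*(x1*z1)) := mul_assoc ..
      _ = x*(x1*(z*z1)) := by rw [K0z1 x1 hx1]
  have K2 : (x*z)*(x2*z2) = x*(x2*(z*z2)) := by
    calc (x*z)*(x2*z2) = x*(z*(x2*z2)) := mul_assoc ..
      _ = x*(x2*(z*z2)) := by rw [K0z2 x2 hx2]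
  -- c-collapse of pair components
  have CH1 : x*(x1*(z*c)) = x*(z*c) := by
    calc x*(x1*(z*c)) = x*(x1*(c*z)) := by rw [← hc z]
      _ = x*((x1*c)*z) := by rw [← mul_assoc x1 c z]
      _ = x*((c*x1)*z) := by rw [← hc x1]
      _ = (x*(c*x1))*z := by rw [← mul_assoc x (c*x1) z]
      _ = ((x*c)*x1)*z := by rw [← mul_assoc x c x1]
      _ = ((x1*x2)*x1)*z := by rw [← hprx]
      _ = (x1*(x2*x1))*z := by rw [mul_assoc x1 x2 x1]
      _ = (x2*x1)*z := by rw [rrbE x1 x2]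
      _ = (x1*x2)*z := by rw [← px1x2]
      _ = (x*c)*z := by rw [hprx]
      _ = x*(c*z) := mul_assoc ..
      _ = x*(z*c) := by rw [hc z]
  have CH2 : x*(x2*(z*c)) = x*(z*c) := by
    calc x*(x2*(z*c)) = x*(x2*(c*z)) := by rw [← hc z]
      _ = x*((x2*c)*z) := by rw [← mul_assoc x2 c z]
      _ = x*((c*x2)*z) := by rw [← hc x2]
      _ = (x*(c*x2))*z := by rw [← mul_assoc x (c*x2) z]
      _ = ((x*c)*x2)*z := by rw [← mul_assoc x c x2]
      _ = ((x1*x2)*x2)*z := by rw [← hprx]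
      _ = (x1*(x2*x2))*z := by rw [mul_assoc x1 x2 x2]
      _ = (x1*x2)*z := by rw [idem x2]
      _ = (x*c)*z := by rw [hprx]
      _ = x*(c*z) := mul_assoc ..
      _ = x*(z*c) := by rw [hc z]
  have F3 : (x*(z*c))*(x*(x1*(z*z1))) = x*(z*c) := by
    calc (x*(z*c))*(x*(x1*(z*z1)))
        = x*((z*c)*(x*(x1*(z*z1)))) := mul_assoc ..
      _ = (z*c)*(x*(x1*(z*z1))) := rrbT x (z*c) (x1*(z*z1))
      _ = z*(c*(x*(x1*(z*z1)))) := mul_assoc ..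
      _ = z*((x*(x1*(z*z1)))*c) := by rw [hc (x*(x1*(z*z1)))]
      _ = z*(x*(x1*(z*(z1*c)))) := by simp only [mul_assoc]
      _ = z*(x*(x1*(z*(c*z1)))) := by rw [← hc z1]
      _ = z*(x*(x1*(z*c))) := by rw [Ec1]
      _ = z*((x*x1)*(z*c)) := by rw [← mul_assoc x x1 (z*c)]
      _ = (x*x1)*(z*c) := rrbT z (x*x1) c
      _ = x*(x1*(z*c)) := mul_assoc ..
      _ = x*(z*c) := CH1
  have F4 : (x*(z*c))*(x*(x2*(z*z2))) = x*(z*c) := by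
    calc (x*(z*c))*(x*(x2*(z*z2)))
        = x*((z*c)*(x*(x2*(z*z2)))) := mul_assoc ..
      _ = (z*c)*(x*(x2*(z*z2))) := rrbT x (z*c) (x2*(z*z2))
      _ = z*(c*(x*(x2*(z*z2)))) := mul_assoc ..
      _ = z*((x*(x2*(z*z2)))*c) := by rw [hc (x*(x2*(z*z2)))]
      _ = z*(x*(x2*(z*(z2*c)))) := by simp only [mul_assoc]
      _ = z*(x*(x2*(z*(c*z2)))) := by rw [← hc z2]
      _ = z*(x*(x2*(z*c))) := by rw [Ec2]
      _ = z*((x*x2)*(z*c)) := by rw [← mul_assoc x x2 (z*c)]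
      _ = (x*x2)*(z*c) := rrbT z (x*x2) c
      _ = x*(x2*(z*c)) := mul_assoc ..
      _ = x*(z*c) := CH2
  -- transported lubs
  have M1a := (hMod1 x (z*z1) x1 hx1 x2 hx2 hm1x x hdx).1
  have M1b := (hMod1 x (z*z2) x1 hx1 x2 hx2 hm1x x hdx).1
  have M2 := (hMod1 z x z1 hz1 z2 hz2 hm1z z hdz).2
  have F5A : rle (x*(x1*(z*z1))) (x*(z*z1)) := by
    have h := M1a.1; rwa [mul_assoc x x1 (z*z1)] at h
  have F5B : rle (x*(z*z1)) (x*z) := by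
    have h := M2.1; rwa [mul_assoc x z z1] at h
  have F5 : rle (x*(x1*(z*z1))) (x*z) := rle_trans F5A F5B
  have F6A : rle (x*(x2*(z*z2))) (x*(z*z2)) := by
    have h := M1b.2.1; rwa [mul_assoc x x2 (z*z2)] at h
  have F6B : rle (x*(z*z2)) (x*z) := by
    have h := M2.2.1; rwa [mul_assoc x z z2] at h
  have F6 : rle (x*(x2*(z*z2))) (x*z) := rle_trans F6A F6B
  -- commutation (x1*z1)·(x*z) etc.
  have K3 : (x1*z1)*(x*z) = x*(x1*(z*z1)) := by
    have hcmp : (x*(x1*(z*z1)))*(x*z) = (x1*z1)*(x*z) := by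
      calc (x*(x1*(z*z1)))*(x*z) = x*((x1*(z*z1))*(x*z)) := mul_assoc ..
        _ = (x1*(z*z1))*(x*z) := rrbT x (x1*(z*z1)) z
        _ = x1*((z*z1)*(x*z)) := mul_assoc ..
        _ = x1*(z*(z1*(x*z))) := by rw [mul_assoc z z1 (x*z)]
        _ = x1*(z*((z1*x)*z)) := by rw [← mul_assoc z1 x z]
        _ = x1*((z1*x)*z) := by rw [rrbE z (z1*x)]
        _ = x1*(z1*(x*z)) := by rw [mul_assoc z1 x z]
        _ = (x1*z1)*(x*z) := (mul_assoc ..).symm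
    calc (x1*z1)*(x*z) = (x*(x1*(z*z1)))*(x*z) := hcmp.symm
      _ = x*(x1*(z*z1)) := F5
  have K4 : (x2*z2)*(x*z) = x*(x2*(z*z2)) := by
    have hcmp : (x*(x2*(z*z2)))*(x*z) = (x2*z2)*(x*z) := by
      calc (x*(x2*(z*z2)))*(x*z) = x*((x2*(z*z2))*(x*z)) := mul_assoc ..
        _ = (x2*(z*z2))*(x*z) := rrbT x (x2*(z*z2)) z
        _ = x2*((z*z2)*(x*z)) := mul_assoc ..
        _ = x2*(z*(z2*(x*z))) := by rw [mul_assoc z z2 (x*z)]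
        _ = x2*(z*((z2*x)*z)) := by rw [← mul_assoc z2 x z]
        _ = x2*((z2*x)*z) := by rw [rrbE z (z2*x)]
        _ = x2*(z2*(x*z)) := by rw [mul_assoc z2 x z]
        _ = (x2*z2)*(x*z) := (mul_assoc ..).symm
    calc (x2*z2)*(x*z) = (x*(x2*(z*z2)))*(x*z) := hcmp.symm
      _ = x*(x2*(z*z2)) := F6
  -- CRUX: cross terms equal x·z·c
  obtain ⟨Q, hQ⟩ := hExi z1 hz1 x2 hx2
  have hQp : z1*x2 = Q*c := hQ.2.2.2.2
  have C1 : rle (x2*z1) c := by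
    show (x2*z1)*c = x2*z1
    rw [← pz1x2, hQp, mul_assoc, idem c]
  have C2 : rle (x2*(z*z1)) (x2*z1) := by
    have h := ((hMod2 z x2 z1 hz1 z2 hz2 hszx).1 z1 hp1z).2.1
    rwa [mul_assoc x2 z z1] at h
  have C3 : rle (x2*(z*z1)) c := rle_trans C2 C1
  have C5 : rle (x2*(z*z1)) (x2*(z*c)) := by
    show (x2*(z*z1))*(x2*(z*c)) = x2*(z*z1)
    calc (x2*(z*z1))*(x2*(z*c))
        = x2*(z*(z1*(x2*(z*c)))) := by simp only [mul_assoc]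
      _ = x2*(z*((z1*x2)*(z*c))) := by rw [← mul_assoc z1 x2 (z*c)]
      _ = x2*(z*((x2*z1)*(z*c))) := by rw [pz1x2]
      _ = x2*(z*(x2*(z1*(z*c)))) := by rw [mul_assoc x2 z1 (z*c)]
      _ = z*(x2*(z1*(z*c))) := rrbT x2 z (z1*(z*c))
      _ = z*((x2*z1)*(z*c)) := by rw [← mul_assoc x2 z1 (z*c)]
      _ = (x2*z1)*(z*c) := rrbT z (x2*z1) c
      _ = x2*(z1*(z*c)) := mul_assoc ..
      _ = x2*((z1*z)*c) := by rw [← mul_assoc z1 z c]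
      _ = x2*((z*z1)*c) := by rw [← hcz1]
      _ = (x2*(z*z1))*c := by simp only [mul_assoc]
      _ = x2*(z*z1) := C3
  have C4 : rle (x2*(z*c)) (x2*(z*z1)) := GEN1 x2
  have C6 : x2*(z*z1) = x2*(z*c) := antisym C5 C4
  have C7 : x*(x2*(z*z1)) = x*(z*c) := by rw [C6]; exact CH2
  obtain ⟨Q', hQ'⟩ := hExi x1 hx1 z2 hz2
  have hQp' : x1*z2 = Q'*c := hQ'.2.2.2.2
  have C1' : rle (x1*z2) c := by
    show (x1*z2)*c = x1*z2
    rw [hQp', mul_assoc, idem c]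
  have C2' : rle (x1*(z*z2)) (x1*z2) := by
    have h := ((hMod2 z x1 z1 hz1 z2 hz2 hszx).2 z2 hp2z).2.1
    rwa [mul_assoc x1 z z2] at h
  have C3' : rle (x1*(z*z2)) c := rle_trans C2' C1'
  have C5' : rle (x1*(z*z2)) (x1*(z*c)) := by
    show (x1*(z*z2))*(x1*(z*c)) = x1*(z*z2)
    calc (x1*(z*z2))*(x1*(z*c))
        = x1*(z*(z2*(x1*(z*c)))) := by simp only [mul_assoc]
      _ = x1*(z*((z2*x1)*(z*c))) := by rw [← mul_assoc z2 x1 (z*c)]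
      _ = x1*(z*((x1*z2)*(z*c))) := by rw [← px1z2]
      _ = x1*(z*(x1*(z2*(z*c)))) := by rw [mul_assoc x1 z2 (z*c)]
      _ = z*(x1*(z2*(z*c))) := rrbT x1 z (z2*(z*c))
      _ = z*((x1*z2)*(z*c)) := by rw [← mul_assoc x1 z2 (z*c)]
      _ = (x1*z2)*(z*c) := rrbT z (x1*z2) c
      _ = x1*(z2*(z*c)) := mul_assoc ..
      _ = x1*((z2*z)*c) := by rw [← mul_assoc z2 z c]
      _ = x1*((z*z2)*c) := by rw [← hcz2]
      _ = (x1*(z*z2))*c := by simp only [mul_assoc]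
      _ = x1*(z*z2) := C3'
  have C4' : rle (x1*(z*c)) (x1*(z*z2)) := GEN2 x1
  have C6' : x1*(z*z2) = x1*(z*c) := antisym C5' C4'
  have C7' : x*(x1*(z*z2)) = x*(z*c) := by rw [C6']; exact CH1
  -- distributivity
  have D1raw := (hMod1 z (x*x1) z1 hz1 z2 hz2 hm1z z hdz).2
  have D1 : IsLub2 (x*(x1*(z*z1))) (x*(z*c)) ((x*x1)*z) :=
    lubconv D1raw (by simp only [mul_assoc])
      (by simp only [mul_assoc]; exact C7') rfl
  have TRIVa : IsLub2 (x*(x1*(z*z1))) (x*(z*c)) (x*(x1*(z*z1))) :=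
    ⟨idem _, F3, fun t h1 _ => h1⟩
  have D2 : (x*x1)*z = x*(x1*(z*z1)) := lub_uniq D1 TRIVa
  have D3raw := (hMod1 z (x*x2) z1 hz1 z2 hz2 hm1z z hdz).2
  have D3 : IsLub2 (x*(z*c)) (x*(x2*(z*z2))) ((x*x2)*z) :=
    lubconv D3raw (by simp only [mul_assoc]; exact C7)
      (by simp only [mul_assoc]) rfl
  have TRIVb : IsLub2 (x*(z*c)) (x*(x2*(z*z2))) (x*(x2*(z*z2))) :=
    ⟨F4, idem _, fun t _ h2 => h2⟩
  have D3' : (x*x2)*z = x*(x2*(z*z2)) := lub_uniq D3 TRIVb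
  have D4 := (hMod1 x z x1 hx1 x2 hx2 hm1x x hdx).1
  have Ddist : IsLub2 (x*(x1*(z*z1))) (x*(x2*(z*z2))) (x*z) :=
    lubconv D4 D2 D3' rfl
  -- p1
  have ix1z1 : (x1*z1)*(x1*z1) = x1*z1 := by
    calc (x1*z1)*(x1*z1) = x1*(z1*(x1*z1)) := mul_assoc ..
      _ = x1*(x1*z1) := by rw [rrbE z1 x1]
      _ = x1*z1 := idemT x1 z1
  have wfact1 : (x1*(z*z1))*(x1*z1) = x1*(z*z1) := by
    calc (x1*(z*z1))*(x1*z1) = x1*(z*(z1*(x1*z1))) := by simp only [mul_assoc]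
      _ = x1*(z*(x1*z1)) := by rw [rrbE z1 x1]
      _ = z*(x1*z1) := rrbT x1 z z1
      _ = x1*(z*z1) := K0z1 x1 hx1
  have gp1a : rle (x*(x1*(z*z1))) (x1*z1) := by
    show (x*(x1*(z*z1)))*(x1*z1) = x*(x1*(z*z1))
    calc (x*(x1*(z*z1)))*(x1*z1) = x*((x1*(z*z1))*(x1*z1)) := mul_assoc ..
      _ = x*(x1*(z*z1)) := by rw [wfact1]
  have gp1b : rle (c*(x1*z1)) (x1*z1) := by
    show (c*(x1*z1))*(x1*z1) = c*(x1*z1)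
    calc (c*(x1*z1))*(x1*z1) = c*((x1*z1)*(x1*z1)) := mul_assoc ..
      _ = c*(x1*z1) := by rw [ix1z1]
  have cc1 : rle (c*(x1*(z*z1))) (c*(x1*z1)) := by
    show (c*(x1*(z*z1)))*(c*(x1*z1)) = c*(x1*(z*z1))
    calc (c*(x1*(z*z1)))*(c*(x1*z1))
        = c*((x1*(z*z1))*(c*(x1*z1))) := mul_assoc ..
      _ = c*((x1*(z*z1))*((x1*z1)*c)) := by rw [hc (x1*z1)]
      _ = c*(((x1*(z*z1))*(x1*z1))*c) := by rw [← mul_assoc (x1*(z*z1)) (x1*z1) c]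
      _ = c*((x1*(z*z1))*c) := by rw [wfact1]
      _ = c*(c*(x1*(z*z1))) := by rw [← hc (x1*(z*z1))]
      _ = c*(x1*(z*z1)) := idemT c _
  have Gp1 : IsLub2 (x*(x1*(z*z1))) (c*(x1*z1)) (x1*z1) := by
    refine ⟨gp1a, gp1b, ?_⟩
    intro t h1 h2
    have L2 := ((hMod2 x (z*z1) x1 hx1 x2 hx2 hsxx).1 x1 hp1x).1
    have h1' : rle (x*x1*(z*z1)) t := by
      rw [mul_assoc x x1 (z*z1)]; exact h1
    have hcc : rle (c*x1*(z*z1)) t := by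
      rw [mul_assoc c x1 (z*z1)]; exact rle_trans cc1 h2
    have hW : rle (x1*(z*z1)) t := L2.2.2 t h1' hcc
    have L1 := ((hMod2 z x1 z1 hz1 z2 hz2 hszx).1 z1 hp1z).2
    refine L1.2.2 t ?_ ?_
    · rw [mul_assoc x1 z z1]; exact hW
    · rw [← hc x1, mul_assoc c x1 z1]; exact h2
  -- p2
  have ix2z2 : (x2*z2)*(x2*z2) = x2*z2 := by
    calc (x2*z2)*(x2*z2) = x2*(z2*(x2*z2)) := mul_assoc ..
      _ = x2*(x2*z2) := by rw [rrbE z2 x2]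
      _ = x2*z2 := idemT x2 z2
  have wfact2 : (x2*(z*z2))*(x2*z2) = x2*(z*z2) := by
    calc (x2*(z*z2))*(x2*z2) = x2*(z*(z2*(x2*z2))) := by simp only [mul_assoc]
      _ = x2*(z*(x2*z2)) := by rw [rrbE z2 x2]
      _ = z*(x2*z2) := rrbT x2 z z2
      _ = x2*(z*z2) := K0z2 x2 hx2
  have gp2a : rle (x*(x2*(z*z2))) (x2*z2) := by
    show (x*(x2*(z*z2)))*(x2*z2) = x*(x2*(z*z2))
    calc (x*(x2*(z*z2)))*(x2*z2) = x*((x2*(z*z2))*(x2*z2)) := mul_assoc ..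
      _ = x*(x2*(z*z2)) := by rw [wfact2]
  have gp2b : rle (c*(x2*z2)) (x2*z2) := by
    show (c*(x2*z2))*(x2*z2) = c*(x2*z2)
    calc (c*(x2*z2))*(x2*z2) = c*((x2*z2)*(x2*z2)) := mul_assoc ..
      _ = c*(x2*z2) := by rw [ix2z2]
  have cc2 : rle (c*(x2*(z*z2))) (c*(x2*z2)) := by
    show (c*(x2*(z*z2)))*(c*(x2*z2)) = c*(x2*(z*z2))
    calc (c*(x2*(z*z2)))*(c*(x2*z2))
        = c*((x2*(z*z2))*(c*(x2*z2))) := mul_assoc ..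
      _ = c*((x2*(z*z2))*((x2*z2)*c)) := by rw [hc (x2*z2)]
      _ = c*(((x2*(z*z2))*(x2*z2))*c) := by rw [← mul_assoc (x2*(z*z2)) (x2*z2) c]
      _ = c*((x2*(z*z2))*c) := by rw [wfact2]
      _ = c*(c*(x2*(z*z2))) := by rw [← hc (x2*(z*z2))]
      _ = c*(x2*(z*z2)) := idemT c _
  have Gp2 : IsLub2 (x*(x2*(z*z2))) (c*(x2*z2)) (x2*z2) := by
    refine ⟨gp2a, gp2b, ?_⟩
    intro t h1 h2
    have L2 := ((hMod2 x (z*z2) x1 hx1 x2 hx2 hsxx).2 x2 hp2x).1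
    have h1' : rle (x*x2*(z*z2)) t := by
      rw [mul_assoc x x2 (z*z2)]; exact h1
    have hcc : rle (c*x2*(z*z2)) t := by
      rw [mul_assoc c x2 (z*z2)]; exact rle_trans cc2 h2
    have hW : rle (x2*(z*z2)) t := L2.2.2 t h1' hcc
    have L1 := ((hMod2 z x2 z1 hz1 z2 hz2 hszx).2 z2 hp2z).2
    refine L1.2.2 t ?_ ?_
    · rw [mul_assoc x2 z z2]; exact hW
    · rw [← hc x2, mul_assoc c x2 z2]; exact h2
  -- prod
  have Gprod : (x1*z1)*(x2*z2) = (x*z)*c := by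
    calc (x1*z1)*(x2*z2) = x1*(z1*(x2*z2)) := mul_assoc ..
      _ = x1*((z1*x2)*z2) := by rw [← mul_assoc z1 x2 z2]
      _ = x1*((x2*z1)*z2) := by rw [pz1x2]
      _ = x1*(x2*(z1*z2)) := by rw [mul_assoc x2 z1 z2]
      _ = x1*(x2*(z*c)) := by rw [hprz]
      _ = (x1*x2)*(z*c) := (mul_assoc ..).symm
      _ = (x*c)*(z*c) := by rw [hprx]
      _ = x*(c*(z*c)) := mul_assoc ..
      _ = x*((z*c)*c) := by rw [hc (z*c)]
      _ = x*(z*(c*c)) := by rw [mul_assoc z c c]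
      _ = x*(z*c) := by rw [idem c]
      _ = (x*z)*c := (mul_assoc ..).symm
  -- assemble
  refine ⟨⟨?_, ?_⟩, ?_, ?_, ?_, ?_⟩
  · rw [K1, K3]
  · rw [K2, K4]
  · rw [K1, K2]; exact Ddist
  · rw [K1]; exact Gp1
  · rw [K2]; exact Gp2
  · exact Gprod
end

section
/- Let A be a right regular band and c ∈ A a central element. Suppose I1, I2 are subsemigroups of A with A = I1 ×_c I2, and let π1 : A → I1 and π2 : A → I2 be the (well-defined) projections determined by x = ⟨⟨π1(x), π2(x)⟩⟩_c for all x ∈ A. Then the relations ker π2 := {(x,y) : π2(x) = π2(y)} and ker π1 := {(x,y) : π1(x) = π1(y)} are complementary factor congruences of A, and moreover I_{ker π2} := {a : π2(a) = π2(c)} = I1 and I_{ker π1} := {a : π1(a) = π1(c)} = I2. Conversely, if θ and δ are complementary factor congruences of A and π1, π2 are the projections associated with the decomposition A = I_θ ×_c I_δ (where I_θ = {a : a θ c}, I_δ = {a : a δ c}), then ker π2 = θ and ker π1 = δ. -/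
open RRBFactor

namespace RRBFactor

variable {A : Type*} [Semigroup A]

/-- A semigroup congruence: an equivalence relation compatible with the
multiplication. -/
def IsCong (r : A → A → Prop) : Prop :=
  Equivalence r ∧ ∀ a b a' b' : A, r a b → r a' b' → r (a * a') (b * b')

/-- Complementary factor congruences: their intersection is the identity and
both relational compositions are all of `A × A`. -/
def CompFactorCong (θ δ : A → A → Prop) : Prop :=
  IsCong θ ∧ IsCong δ ∧
  (∀ a b : A, θ a b → δ a b → a = b) ∧
  (∀ a b : A, (∃ u, θ a u ∧ δ u b) ∧ (∃ v, δ a v ∧ θ v b))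

end RRBFactor


namespace RRBFactor

set_option linter.unusedSectionVars false

section Aux
variable {A : Type*} [Semigroup A]

section Basic
variable (idem : ∀ x : A, x * x = x) (rrb : ∀ a b : A, a * b * a = b * a)
include idem rrb

lemma rle_refl (x : A) : rle x x := idem x

lemma rle_trans {a b d : A} (hab : rle a b) (hbd : rle b d) : rle a d := by
  unfold rle at *
  calc a * d = a * b * d := by rw [hab]
    _ = a * (b * d) := mul_assoc ..
    _ = a * b := by rw [hbd]
    _ = a := hab

lemma rle_antisymm {a b : A} (hab : rle a b) (hba : rle b a) : a = b := by
  unfold rle at *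
  calc a = a * b := hab.symm
    _ = a * (b * a) := by rw [hba]
    _ = a * b * a := (mul_assoc ..).symm
    _ = b * a := rrb a b
    _ = b := hba

lemma lub_unique {a b s s' : A} (h : IsLub2 a b s) (h' : IsLub2 a b s') : s = s' :=
  rle_antisymm idem rrb (h.2.2 s' h'.1 h'.2.1) (h'.2.2 s h.1 h.2.1)

lemma lub_symm {a b s : A} (h : IsLub2 a b s) : IsLub2 b a s :=
  ⟨h.2.1, h.1, fun t hb ha => h.2.2 t ha hb⟩

lemma lub_of_le {a b : A} (h : rle b a) : IsLub2 a b a := ⟨idem a, h, fun _ ha _ => ha⟩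

lemma lub_self (a : A) : IsLub2 a a a := ⟨idem a, idem a, fun _ h _ => h⟩

lemma lub_eq_of_le {a b s : A} (h : IsLub2 a b s) (hba : rle b a) : s = a :=
  lub_unique idem rrb h (lub_of_le idem rrb hba)

lemma rle_mul_right (a b : A) : rle (a * b) b := by
  unfold rle; rw [mul_assoc, idem]

/-- `a * (b * a) = b * a`. -/
lemma m_tail (a b : A) : a * (b * a) = b * a := by rw [← mul_assoc]; exact rrb a b

/-- `a * (a * b) = a * b`. -/
lemma m_idem1 (a b : A) : a * (a * b) = a * b := by rw [← mul_assoc, idem]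

lemma m_idem2 (a b : A) : a * b * b = a * b := by rw [mul_assoc, idem]

end Basic

section Central
variable (idem : ∀ x : A, x * x = x) (rrb : ∀ a b : A, a * b * a = b * a)
variable {c : A} (hc : ∀ x : A, c * x = x * c)
include idem rrb hc

/-- slide `c` rightwards: `u * c * v = u * v * c`. -/
lemma c_slide (u v : A) : u * c * v = u * v * c := by
  rw [mul_assoc, hc, ← mul_assoc]

lemma rle_sc (s : A) : rle (s * c) s := by
  unfold rle
  calc s * c * s = s * (c * s) := mul_assoc ..
    _ = s * (s * c) := by rw [hc]
    _ = s * s * c := (mul_assoc ..).symm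
    _ = s * c := by rw [idem]

end Central


section PairBasic
variable (idem : ∀ x : A, x * x = x) (rrb : ∀ a b : A, a * b * a = b * a)
variable {c : A} (hc : ∀ x : A, c * x = x * c)
include idem rrb hc

lemma e_x (x : A) : (x * c) * x = x * c := by
  calc (x * c) * x = x * (c * x) := mul_assoc ..
    _ = x * (x * c) := by rw [hc]
    _ = x * x * c := (mul_assoc ..).symm
    _ = x * c := by rw [idem]

lemma ec_ec (x : A) : (x * c) * (x * c) = x * c := idem _

lemma e_c (x : A) : (x * c) * c = x * c := by rw [mul_assoc, idem]

variable {x x1 x2 : A} (hp : IsPair c x1 x2 x)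
include hp

lemma pair_e_x2 : (x * c) * x2 = x * c := by
  rw [← hp.2.2.2.2, mul_assoc, idem]

lemma pair_x1_e : x1 * (x * c) = x * c := by
  rw [← hp.2.2.2.2, ← mul_assoc, idem]

lemma pair_x2_e : x2 * (x * c) = x * c := by
  rw [← hp.2.2.2.2, ← mul_assoc, rrb]

lemma pair_xx1x : x * x1 * x = x * x1 := by
  calc x * x1 * x = x * (x1 * x) := mul_assoc ..
    _ = x * (x * x1) := by rw [← hp.1.1]
    _ = x * x * x1 := (mul_assoc ..).symm
    _ = x * x1 := by rw [idem]

lemma pair_xx2x : x * x2 * x = x * x2 := by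
  calc x * x2 * x = x * (x2 * x) := mul_assoc ..
    _ = x * (x * x2) := by rw [← hp.1.2]
    _ = x * x * x2 := (mul_assoc ..).symm
    _ = x * x2 := by rw [idem]

lemma pair_exc2 : x * x2 * c = x * c := by
  calc x * x2 * c = x * (x2 * c) := mul_assoc ..
    _ = x * (c * x2) := by rw [hc]
    _ = (x * c) * x2 := (mul_assoc ..).symm
    _ = x * c := pair_e_x2 idem rrb hc hp

lemma pair_elig1 : rle (x * c) (x1 * x2) := by
  unfold rle; rw [hp.2.2.2.2]; exact idem _

lemma pair_elig2 : rle (x1 * x2) x := by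
  unfold rle
  calc x1 * x2 * x = (x * c) * x := by rw [hp.2.2.2.2]
    _ = x * c := e_x idem rrb hc x
    _ = x1 * x2 := hp.2.2.2.2.symm

variable (hperm : x1 * x2 = x2 * x1)
include hperm

lemma pair_e_x1 : (x * c) * x1 = x * c := by
  rw [← hp.2.2.2.2, rrb, ← hperm]

lemma pair_exc1 : x * x1 * c = x * c := by
  calc x * x1 * c = x * (x1 * c) := mul_assoc ..
    _ = x * (c * x1) := by rw [hc]
    _ = (x * c) * x1 := (mul_assoc ..).symm
    _ = x * c := pair_e_x1 idem rrb hc hp hperm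

end PairBasic

section ModDerived
variable (idem : ∀ x : A, x * x = x) (rrb : ∀ a b : A, a * b * a = b * a)
variable {c : A} (hc : ∀ x : A, c * x = x * c)
variable {I1 I2 : Set A}
variable (hmod1 : ∀ x y : A, ∀ x1 ∈ I1, ∀ x2 ∈ I2, rle (x * c) (x1 * x2) →
    ∀ s : A, IsLub2 (x * x1) (x * x2) s →
      IsLub2 (x * x1 * y) (x * x2 * y) (s * y) ∧
      IsLub2 (y * x * x1) (y * x * x2) (y * s))
variable (hmod2 : ∀ x y : A, ∀ x1 ∈ I1, ∀ x2 ∈ I2, rle (x1 * x2) x →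
    (∀ s : A, IsLub2 (x * x1) (c * x1) s →
      IsLub2 (x * x1 * y) (c * x1 * y) (s * y) ∧
      IsLub2 (y * x * x1) (y * c * x1) (y * s)) ∧
    (∀ s : A, IsLub2 (x * x2) (c * x2) s →
      IsLub2 (x * x2 * y) (c * x2 * y) (s * y) ∧
      IsLub2 (y * x * x2) (y * c * x2) (y * s)))
variable {x x1 x2 : A} (h1 : x1 ∈ I1) (h2 : x2 ∈ I2) (hp : IsPair c x1 x2 x)
include idem rrb hc h1 h2 hp

section UseMod1
include hmod1

lemma pd1 (y : A) : IsLub2 (x * x1 * y) (x * x2 * y) (x * y) :=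
  (hmod1 x y x1 h1 x2 h2 (pair_elig1 idem rrb hc hp) x hp.2.1).1

lemma pd2 (y : A) : IsLub2 (y * x * x1) (y * x * x2) (y * x) :=
  (hmod1 x y x1 h1 x2 h2 (pair_elig1 idem rrb hc hp) x hp.2.1).2

lemma mb1 (y : A) : y * x * x1 = x1 * (y * x) := by
  have h := (pd2 idem rrb hc hmod1 h1 h2 hp y).1
  unfold rle at h
  have heq : (y * x * x1) * (y * x) = x1 * (y * x) := rrb (y * x) x1
  exact h.symm.trans heq

lemma mb2 (y : A) : y * x * x2 = x2 * (y * x) := by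
  have h := (pd2 idem rrb hc hmod1 h1 h2 hp y).2.1
  unfold rle at h
  have heq : (y * x * x2) * (y * x) = x2 * (y * x) := rrb (y * x) x2
  exact h.symm.trans heq

end UseMod1

section UseMod2
include hmod2

lemma pc11 (y : A) : IsLub2 (x * x1 * y) (c * x1 * y) (x1 * y) :=
  ((hmod2 x y x1 h1 x2 h2 (pair_elig2 idem rrb hc hp)).1 x1 hp.2.2.1).1

lemma pc12 (y : A) : IsLub2 (y * x * x1) (y * c * x1) (y * x1) :=
  ((hmod2 x y x1 h1 x2 h2 (pair_elig2 idem rrb hc hp)).1 x1 hp.2.2.1).2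

lemma pc21 (y : A) : IsLub2 (x * x2 * y) (c * x2 * y) (x2 * y) :=
  ((hmod2 x y x1 h1 x2 h2 (pair_elig2 idem rrb hc hp)).2 x2 hp.2.2.2.1).1

lemma pc22 (y : A) : IsLub2 (y * x * x2) (y * c * x2) (y * x2) :=
  ((hmod2 x y x1 h1 x2 h2 (pair_elig2 idem rrb hc hp)).2 x2 hp.2.2.2.1).2

lemma ma1 (y : A) : y * x * x1 = x * y * x1 := by
  have h := (pc12 idem rrb hc hmod2 h1 h2 hp y).1
  unfold rle at h
  have heq : (y * x * x1) * (y * x1) = x * y * x1 := by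
    calc (y * x * x1) * (y * x1) = (y * x) * (x1 * (y * x1)) := by
          rw [mul_assoc (y*x) x1, mul_assoc]
      _ = (y * x) * (y * x1) := by rw [m_tail idem rrb x1 y]
      _ = ((y * x) * y) * x1 := (mul_assoc ..).symm
      _ = (x * y) * x1 := by rw [rrb]
  exact h.symm.trans heq

lemma ma2 (y : A) : y * x * x2 = x * y * x2 := by
  have h := (pc22 idem rrb hc hmod2 h1 h2 hp y).1
  unfold rle at h
  have heq : (y * x * x2) * (y * x2) = x * y * x2 := by
    calc (y * x * x2) * (y * x2) = (y * x) * (x2 * (y * x2)) := by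
          rw [mul_assoc (y*x) x2, mul_assoc]
      _ = (y * x) * (y * x2) := by rw [m_tail idem rrb x2 y]
      _ = ((y * x) * y) * x2 := (mul_assoc ..).symm
      _ = (x * y) * x2 := by rw [rrb]
  exact h.symm.trans heq

end UseMod2

end ModDerived

section Pure
variable (idem : ∀ x : A, x * x = x) (rrb : ∀ a b : A, a * b * a = b * a)
include idem rrb

/-- pure band identity: `x·x1·y = x·y·x1·y`. -/
lemma mcpure (x x1 y : A) : x * x1 * y = x * y * x1 * y := by
  have w1 : (x * x1) * ((y * x1) * y) = x * x1 * y := by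
    rw [rrb y x1]
    calc (x * x1) * (x1 * y) = x * (x1 * (x1 * y)) := mul_assoc ..
      _ = x * (x1 * y) := by rw [m_idem1 idem rrb]
      _ = x * x1 * y := (mul_assoc ..).symm
  have w2 : (x * x1) * ((y * x1) * y) = x * y * x1 * y := by
    calc (x * x1) * ((y * x1) * y) = ((x * x1) * (y * x1)) * y := (mul_assoc ..).symm
      _ = (x * (x1 * (y * x1))) * y := by rw [mul_assoc x x1]
      _ = (x * (y * x1)) * y := by rw [m_tail idem rrb x1 y]
      _ = ((x * y) * x1) * y := by rw [← mul_assoc]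
  exact w1.symm.trans w2

end Pure


section CFix
variable (idem : ∀ x : A, x * x = x) (rrb : ∀ a b : A, a * b * a = b * a)
variable {c : A} (hc : ∀ x : A, c * x = x * c)
include idem rrb hc

/-- the components of the pair of `c` are both `c`. -/
lemma c_components {p q : A} (hpc : IsPair c p q c) (hperm : p * q = q * p) :
    p = c ∧ q = c := by
  have hprod : p * q = c := by rw [hpc.2.2.2.2, idem]
  have h1 : p = c * p := lub_unique idem rrb hpc.2.2.1 (lub_self idem rrb (c*p))
  have h2 : q = c * q := lub_unique idem rrb hpc.2.2.2.1 (lub_self idem rrb (c*q))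
  constructor
  · calc p = c * p := h1
      _ = (p * q) * p := by rw [hprod]
      _ = q * p := rrb p q
      _ = p * q := hperm.symm
      _ = c := hprod
  · calc q = c * q := h2
      _ = (p * q) * q := by rw [hprod]
      _ = p * (q * q) := mul_assoc ..
      _ = p * q := by rw [idem]
      _ = c := hprod

/-- an element of `I1` pairs as `⟨⟨a, c⟩⟩`. -/
lemma pair_I1 (a : A) : IsPair c a c a := by
  refine ⟨⟨rfl, (hc a).symm⟩, ?_, ?_, ?_, rfl⟩
  · rw [idem a]
    exact lub_of_le idem rrb (rle_sc idem rrb hc a)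
  · rw [idem a]
    refine lub_of_le idem rrb ?_
    show c * a * a = c * a
    rw [mul_assoc, idem]
  · rw [idem c]
    exact ⟨by show a * c * c = a * c; rw [mul_assoc, idem], idem c, fun t _ h => h⟩

/-- an element of `I2` pairs as `⟨⟨c, b⟩⟩`. -/
lemma pair_I2 (b : A) : IsPair c c b b := by
  refine ⟨⟨(hc b).symm, rfl⟩, ?_, ?_, ?_, hc b⟩
  · rw [idem b]
    exact lub_symm idem rrb (lub_of_le idem rrb (rle_sc idem rrb hc b))
  · rw [idem c]
    refine ⟨?_, idem c, fun t _ h => h⟩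
    show b * c * c = b * c
    rw [mul_assoc, idem]
  · rw [idem b]
    refine lub_of_le idem rrb ?_
    show c * b * b = c * b
    rw [mul_assoc, idem]

end CFix

section TLemmas
variable (idem : ∀ x : A, x * x = x) (rrb : ∀ a b : A, a * b * a = b * a)
variable {c : A} (hc : ∀ x : A, c * x = x * c)
variable {I1 I2 : Set A}
variable (habs1 : ∀ x1 ∈ I1, ∀ y1 ∈ I1, ∀ z2 ∈ I2, ∀ s : A,
      (IsLub2 x1 (y1 * z2) s ↔ IsLub2 x1 (y1 * c) s))
variable (habs2 : ∀ x2 ∈ I2, ∀ y2 ∈ I2, ∀ z1 ∈ I1, ∀ s : A,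
      (IsLub2 x2 (y2 * z1) s ↔ IsLub2 x2 (y2 * c) s))
variable (hmc1 : MulClosed I1) (hmc2 : MulClosed I2)
variable (hcI1 : c ∈ I1) (hcI2 : c ∈ I2)
include idem rrb hc

section T1
include habs1 hmc1 hcI1

lemma t_absorb1 {x1 b : A} (h1 : x1 ∈ I1) (hb : b ∈ I2) : rle (x1 * b) (x1 * c) :=
  (((habs1 (x1*c) (hmc1 x1 h1 c hcI1) x1 h1 b hb (x1*c)).2
    (lub_self idem rrb (x1*c)))).2.1

lemma t_cabs1 {x1 b : A} (h1 : x1 ∈ I1) (hb : b ∈ I2) : x1 * b * c = x1 * b := by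
  have ha := t_absorb1 idem rrb hc habs1 hmc1 hcI1 h1 hb
  unfold rle at ha
  calc (x1 * b) * c = ((x1 * b) * (x1 * c)) * c := by rw [ha]
    _ = (x1 * b) * ((x1 * c) * c) := mul_assoc ..
    _ = (x1 * b) * (x1 * (c * c)) := by rw [mul_assoc x1 c c]
    _ = (x1 * b) * (x1 * c) := by rw [idem]
    _ = x1 * b := ha

lemma tb2 {x x1 x2 b : A} (hp : IsPair c x1 x2 x) (hperm : x1 * x2 = x2 * x1)
    (h1 : x1 ∈ I1) (hb : b ∈ I2) : x * x1 * b = x * c * b := by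
  have hsplit : x * x1 * b = (x * b) * (x1 * b) := by
    rw [mcpure idem rrb x x1 b, mul_assoc (x*b) x1 b]
  have habsb : (x * x1 * b) * c = x * x1 * b := by
    calc (x * x1 * b) * c = ((x * b) * (x1 * b)) * c := by rw [hsplit]
      _ = (x * b) * ((x1 * b) * c) := mul_assoc ..
      _ = (x * b) * (x1 * b) := by rw [t_cabs1 idem rrb hc habs1 hmc1 hcI1 h1 hb]
      _ = x * x1 * b := hsplit.symm
  calc x * x1 * b = (x * x1 * b) * c := habsb.symm
    _ = (x * x1) * (b * c) := mul_assoc ..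
    _ = (x * x1) * (c * b) := by rw [hc]
    _ = ((x * x1) * c) * b := (mul_assoc ..).symm
    _ = (x * c) * b := by rw [pair_exc1 idem rrb hc hp hperm]

end T1

section T2
include habs2 hmc2 hcI2

lemma t_absorb2 {x2 a : A} (h2 : x2 ∈ I2) (ha : a ∈ I1) : rle (x2 * a) (x2 * c) :=
  (((habs2 (x2*c) (hmc2 x2 h2 c hcI2) x2 h2 a ha (x2*c)).2
    (lub_self idem rrb (x2*c)))).2.1

lemma t_cabs2 {x2 a : A} (h2 : x2 ∈ I2) (ha : a ∈ I1) : x2 * a * c = x2 * a := by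
  have hh := t_absorb2 idem rrb hc habs2 hmc2 hcI2 h2 ha
  unfold rle at hh
  calc (x2 * a) * c = ((x2 * a) * (x2 * c)) * c := by rw [hh]
    _ = (x2 * a) * ((x2 * c) * c) := mul_assoc ..
    _ = (x2 * a) * (x2 * (c * c)) := by rw [mul_assoc x2 c c]
    _ = (x2 * a) * (x2 * c) := by rw [idem]
    _ = x2 * a := hh

lemma ta2 {x x1 x2 a : A} (hp : IsPair c x1 x2 x)
    (h2 : x2 ∈ I2) (ha : a ∈ I1) : x * x2 * a = x * c * a := by
  have hsplit : x * x2 * a = (x * a) * (x2 * a) := by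
    rw [mcpure idem rrb x x2 a, mul_assoc (x*a) x2 a]
  have habsa : (x * x2 * a) * c = x * x2 * a := by
    calc (x * x2 * a) * c = ((x * a) * (x2 * a)) * c := by rw [hsplit]
      _ = (x * a) * ((x2 * a) * c) := mul_assoc ..
      _ = (x * a) * (x2 * a) := by rw [t_cabs2 idem rrb hc habs2 hmc2 hcI2 h2 ha]
      _ = x * x2 * a := hsplit.symm
  calc x * x2 * a = (x * x2 * a) * c := habsa.symm
    _ = (x * x2) * (a * c) := mul_assoc ..
    _ = (x * x2) * (c * a) := by rw [hc]
    _ = ((x * x2) * c) * a := (mul_assoc ..).symm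
    _ = (x * c) * a := by rw [pair_exc2 idem rrb hc hp]

end T2

end TLemmas


section Uniq
variable (idem : ∀ x : A, x * x = x) (rrb : ∀ a b : A, a * b * a = b * a)
variable {c : A} (hc : ∀ x : A, c * x = x * c)
variable {I1 I2 : Set A}
variable (hperm' : ∀ x1 ∈ I1, ∀ x2 ∈ I2, x1 * x2 = x2 * x1)
variable (hmod1 : ∀ x y : A, ∀ x1 ∈ I1, ∀ x2 ∈ I2, rle (x * c) (x1 * x2) →
    ∀ s : A, IsLub2 (x * x1) (x * x2) s →
      IsLub2 (x * x1 * y) (x * x2 * y) (s * y) ∧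
      IsLub2 (y * x * x1) (y * x * x2) (y * s))
variable (hmod2 : ∀ x y : A, ∀ x1 ∈ I1, ∀ x2 ∈ I2, rle (x1 * x2) x →
    (∀ s : A, IsLub2 (x * x1) (c * x1) s →
      IsLub2 (x * x1 * y) (c * x1 * y) (s * y) ∧
      IsLub2 (y * x * x1) (y * c * x1) (y * s)) ∧
    (∀ s : A, IsLub2 (x * x2) (c * x2) s →
      IsLub2 (x * x2 * y) (c * x2 * y) (s * y) ∧
      IsLub2 (y * x * x2) (y * c * x2) (y * s)))
variable (habs1 : ∀ x1 ∈ I1, ∀ y1 ∈ I1, ∀ z2 ∈ I2, ∀ s : A,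
      (IsLub2 x1 (y1 * z2) s ↔ IsLub2 x1 (y1 * c) s))
variable (habs2 : ∀ x2 ∈ I2, ∀ y2 ∈ I2, ∀ z1 ∈ I1, ∀ s : A,
      (IsLub2 x2 (y2 * z1) s ↔ IsLub2 x2 (y2 * c) s))
variable (hmc1 : MulClosed I1) (hmc2 : MulClosed I2)
variable (hcI1 : c ∈ I1) (hcI2 : c ∈ I2)
include idem rrb hc

/-- uniqueness of the element determined by a pair. -/
lemma x_uniq (hperm'' : ∀ x1 ∈ I1, ∀ x2 ∈ I2, x1 * x2 = x2 * x1)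
    (hmod2' : ∀ x y : A, ∀ x1 ∈ I1, ∀ x2 ∈ I2, rle (x1 * x2) x →
    (∀ s : A, IsLub2 (x * x1) (c * x1) s →
      IsLub2 (x * x1 * y) (c * x1 * y) (s * y) ∧
      IsLub2 (y * x * x1) (y * c * x1) (y * s)) ∧
    (∀ s : A, IsLub2 (x * x2) (c * x2) s →
      IsLub2 (x * x2 * y) (c * x2 * y) (s * y) ∧
      IsLub2 (y * x * x2) (y * c * x2) (y * s)))
    {x x' x1 x2 : A} (h1 : x1 ∈ I1) (h2 : x2 ∈ I2)
    (hp : IsPair c x1 x2 x) (hp' : IsPair c x1 x2 x') : x = x' := by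
  have px := hperm'' x1 h1 x2 h2
  have he : x * c = x' * c := (hp.2.2.2.2).symm.trans hp'.2.2.2.2
  -- first components
  have inst1 := ((hmod2' x' x x1 h1 x2 h2 (pair_elig2 idem rrb hc hp')).1 x1 hp'.2.2.1).2
  have inst2 := ((hmod2' x x' x1 h1 x2 h2 (pair_elig2 idem rrb hc hp)).1 x1 hp.2.2.1).2
  have r1 : x * c * x1 = x * c := pair_e_x1 idem rrb hc hp px
  have r2 : x' * c * x1 = x * c := (pair_e_x1 idem rrb hc hp' px).trans he.symm
  have hma : x * x' * x1 = x' * x * x1 :=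
    ma1 idem rrb hc hmod2' h1 h2 hp' x
  rw [r1, hma] at inst1
  rw [r2] at inst2
  have e1 : x * x1 = x' * x1 := lub_unique idem rrb inst1 inst2
  -- second components
  have inst3 := ((hmod2' x' x x1 h1 x2 h2 (pair_elig2 idem rrb hc hp')).2 x2 hp'.2.2.2.1).2
  have inst4 := ((hmod2' x x' x1 h1 x2 h2 (pair_elig2 idem rrb hc hp)).2 x2 hp.2.2.2.1).2
  have r3 : x * c * x2 = x * c := pair_e_x2 idem rrb hc hp
  have r4 : x' * c * x2 = x * c := (pair_e_x2 idem rrb hc hp').trans he.symm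
  have hma2 : x * x' * x2 = x' * x * x2 :=
    ma2 idem rrb hc hmod2' h1 h2 hp' x
  rw [r3, hma2] at inst3
  rw [r4] at inst4
  have e2 : x * x2 = x' * x2 := lub_unique idem rrb inst3 inst4
  have d := hp.2.1
  rw [e1, e2] at d
  exact lub_unique idem rrb d hp'.2.1

include hperm' hmod1 hmod2 habs1 habs2 hmc1 hmc2 hcI1 hcI2

/-- uniqueness of the components of a pair of a given element. -/
lemma comp_uniq {x x1 x2 y1 y2 : A}
    (h1 : x1 ∈ I1) (h2 : x2 ∈ I2) (hy1 : y1 ∈ I1) (hy2 : y2 ∈ I2)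
    (hp : IsPair c x1 x2 x) (hq : IsPair c y1 y2 x) : x1 = y1 ∧ x2 = y2 := by
  have px := hperm' x1 h1 x2 h2
  have py := hperm' y1 hy1 y2 hy2
  have hex1 : (x*c) * x1 = x*c := pair_e_x1 idem rrb hc hp px
  have hex2 : (x*c) * x2 = x*c := pair_e_x2 idem rrb hc hp
  have hey1 : (x*c) * y1 = x*c := pair_e_x1 idem rrb hc hq py
  have hey2 : (x*c) * y2 = x*c := pair_e_x2 idem rrb hc hq
  -- (a) c-components agree
  have h1c : rle (x1 * c) y1 := by
    have hl : IsLub2 y1 (x1 * x2) y1 := by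
      refine ⟨idem y1, ?_, fun t ht _ => ht⟩
      show (x1 * x2) * y1 = x1 * x2
      rw [hp.2.2.2.2]; exact hey1
    exact ((habs1 y1 hy1 x1 h1 x2 h2 y1).1 hl).2.1
  have hy1cx : rle (y1 * c) x1 := by
    have hl : IsLub2 x1 (y1 * y2) x1 := by
      refine ⟨idem x1, ?_, fun t ht _ => ht⟩
      show (y1 * y2) * x1 = y1 * y2
      rw [hq.2.2.2.2]; exact hex1
    exact ((habs1 x1 h1 y1 hy1 y2 hy2 x1).1 hl).2.1
  have h2c : rle (x2 * c) y2 := by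
    have hl : IsLub2 y2 (x2 * x1) y2 := by
      refine ⟨idem y2, ?_, fun t ht _ => ht⟩
      show (x2 * x1) * y2 = x2 * x1
      rw [← px, hp.2.2.2.2]; exact hey2
    exact ((habs2 y2 hy2 x2 h2 x1 h1 y2).1 hl).2.1
  have hy2cx : rle (y2 * c) x2 := by
    have hl : IsLub2 x2 (y2 * y1) x2 := by
      refine ⟨idem x2, ?_, fun t ht _ => ht⟩
      show (y2 * y1) * x2 = y2 * y1
      rw [← py, hq.2.2.2.2]; exact hex2
    exact ((habs2 x2 h2 y2 hy2 y1 hy1 x2).1 hl).2.1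
  have hcc1 : c * x1 = c * y1 := by
    have u1 : (c*x1)*(c*y1) = c*x1 := by
      calc (c*x1)*(c*y1) = c*(x1*(c*y1)) := mul_assoc ..
        _ = c*((x1*c)*y1) := by rw [← mul_assoc x1 c y1]
        _ = c*(x1*c) := by rw [h1c]
        _ = c*(c*x1) := by rw [← hc x1]
        _ = (c*c)*x1 := (mul_assoc ..).symm
        _ = c*x1 := by rw [idem]
    have u2 : (c*y1)*(c*x1) = c*y1 := by
      calc (c*y1)*(c*x1) = c*(y1*(c*x1)) := mul_assoc ..
        _ = c*((y1*c)*x1) := by rw [← mul_assoc y1 c x1]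
        _ = c*(y1*c) := by rw [hy1cx]
        _ = c*(c*y1) := by rw [← hc y1]
        _ = (c*c)*y1 := (mul_assoc ..).symm
        _ = c*y1 := by rw [idem]
    exact rle_antisymm idem rrb u1 u2
  have hcc2 : c * x2 = c * y2 := by
    have u1 : (c*x2)*(c*y2) = c*x2 := by
      calc (c*x2)*(c*y2) = c*(x2*(c*y2)) := mul_assoc ..
        _ = c*((x2*c)*y2) := by rw [← mul_assoc x2 c y2]
        _ = c*(x2*c) := by rw [h2c]
        _ = c*(c*x2) := by rw [← hc x2]
        _ = (c*c)*x2 := (mul_assoc ..).symm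
        _ = c*x2 := by rw [idem]
    have u2 : (c*y2)*(c*x2) = c*y2 := by
      calc (c*y2)*(c*x2) = c*(y2*(c*x2)) := mul_assoc ..
        _ = c*((y2*c)*x2) := by rw [← mul_assoc y2 c x2]
        _ = c*(y2*c) := by rw [hy2cx]
        _ = c*(c*y2) := by rw [← hc y2]
        _ = (c*c)*y2 := (mul_assoc ..).symm
        _ = c*y2 := by rw [idem]
    exact rle_antisymm idem rrb u1 u2
  -- (c) x-components agree
  have cX : x * x1 = x * x1 * y1 := by
    have l1 := (hmod1 x (x*x1) y1 hy1 y2 hy2 (pair_elig1 idem rrb hc hq) x hq.2.1).2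
    rw [pair_xx1x idem rrb hc hp] at l1
    have t2 : x * x1 * y2 = x * c :=
      (tb2 idem rrb hc habs1 hmc1 hcI1 hp px h1 hy2).trans hey2
    rw [t2] at l1
    have hle : rle (x*c) (x*x1*y1) := by
      show (x*c)*(x*x1*y1) = x*c
      calc (x*c)*(x*x1*y1) = ((x*c)*(x*x1))*y1 := (mul_assoc ..).symm
        _ = (((x*c)*x)*x1)*y1 := by rw [← mul_assoc (x*c) x x1]
        _ = ((x*c)*x1)*y1 := by rw [e_x idem rrb hc x]
        _ = (x*c)*y1 := by rw [hex1]
        _ = x*c := hey1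
    exact (lub_eq_of_le idem rrb l1 hle)
  have cY : x * y1 = x * y1 * x1 := by
    have l1 := (hmod1 x (x*y1) x1 h1 x2 h2 (pair_elig1 idem rrb hc hp) x hp.2.1).2
    rw [pair_xx1x idem rrb hc hq] at l1
    have t2 : x * y1 * x2 = x * c :=
      (tb2 idem rrb hc habs1 hmc1 hcI1 hq py hy1 h2).trans hex2
    rw [t2] at l1
    have hle : rle (x*c) (x*y1*x1) := by
      show (x*c)*(x*y1*x1) = x*c
      calc (x*c)*(x*y1*x1) = ((x*c)*(x*y1))*x1 := (mul_assoc ..).symm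
        _ = (((x*c)*x)*y1)*x1 := by rw [← mul_assoc (x*c) x y1]
        _ = ((x*c)*y1)*x1 := by rw [e_x idem rrb hc x]
        _ = (x*c)*x1 := by rw [hey1]
        _ = x*c := hex1
    exact (lub_eq_of_le idem rrb l1 hle)
  have s1 : y1 * x * x1 = x * y1 * x1 := ma1 idem rrb hc hmod2 h1 h2 hp y1
  have s2 : x1 * x * y1 = x * x1 * y1 := ma1 idem rrb hc hmod2 hy1 hy2 hq x1
  have s3 : x1 * x * y1 = y1 * (x1 * x) := mb1 idem rrb hc hmod1 hy1 hy2 hq x1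
  have chain : x * x1 * y1 = x * y1 * x1 := by
    rw [← s2, s3, ← hp.1.1, ← mul_assoc y1 x x1]
    exact s1
  have main1 : x * x1 = x * y1 := by
    rw [cX, chain, ← cY]
  have e1 : x1 = y1 := by
    have hq1 := hq.2.2.1
    rw [← main1, ← hcc1] at hq1
    exact lub_unique idem rrb hp.2.2.1 hq1
  -- mirror for second components
  have cX2 : x * x2 = x * x2 * y2 := by
    have l1 := (hmod1 x (x*x2) y1 hy1 y2 hy2 (pair_elig1 idem rrb hc hq) x hq.2.1).2
    rw [pair_xx2x idem rrb hc hp] at l1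
    have t2 : x * x2 * y1 = x * c :=
      (ta2 idem rrb hc habs2 hmc2 hcI2 hp h2 hy1).trans hey1
    rw [t2] at l1
    have hle : rle (x*c) (x*x2*y2) := by
      show (x*c)*(x*x2*y2) = x*c
      calc (x*c)*(x*x2*y2) = ((x*c)*(x*x2))*y2 := (mul_assoc ..).symm
        _ = (((x*c)*x)*x2)*y2 := by rw [← mul_assoc (x*c) x x2]
        _ = ((x*c)*x2)*y2 := by rw [e_x idem rrb hc x]
        _ = (x*c)*y2 := by rw [hex2]
        _ = x*c := hey2
    exact (lub_eq_of_le idem rrb (lub_symm idem rrb l1) hle)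
  have cY2 : x * y2 = x * y2 * x2 := by
    have l1 := (hmod1 x (x*y2) x1 h1 x2 h2 (pair_elig1 idem rrb hc hp) x hp.2.1).2
    rw [pair_xx2x idem rrb hc hq] at l1
    have t2 : x * y2 * x1 = x * c :=
      (ta2 idem rrb hc habs2 hmc2 hcI2 hq hy2 h1).trans hex1
    rw [t2] at l1
    have hle : rle (x*c) (x*y2*x2) := by
      show (x*c)*(x*y2*x2) = x*c
      calc (x*c)*(x*y2*x2) = ((x*c)*(x*y2))*x2 := (mul_assoc ..).symm
        _ = (((x*c)*x)*y2)*x2 := by rw [← mul_assoc (x*c) x y2]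
        _ = ((x*c)*y2)*x2 := by rw [e_x idem rrb hc x]
        _ = (x*c)*x2 := by rw [hey2]
        _ = x*c := hex2
    exact (lub_eq_of_le idem rrb (lub_symm idem rrb l1) hle)
  have s1' : y2 * x * x2 = x * y2 * x2 := ma2 idem rrb hc hmod2 h1 h2 hp y2
  have s2' : x2 * x * y2 = x * x2 * y2 := ma2 idem rrb hc hmod2 hy1 hy2 hq x2
  have s3' : x2 * x * y2 = y2 * (x2 * x) := mb2 idem rrb hc hmod1 hy1 hy2 hq x2
  have chain2 : x * x2 * y2 = x * y2 * x2 := by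
    rw [← s2', s3', ← hp.1.2, ← mul_assoc y2 x x2]
    exact s1'
  have main2 : x * x2 = x * y2 := by
    rw [cX2, chain2, ← cY2]
  have e2 : x2 = y2 := by
    have hq2 := hq.2.2.2.1
    rw [← main2, ← hcc2] at hq2
    exact lub_unique idem rrb hp.2.2.2.1 hq2
  exact ⟨e1, e2⟩

end Uniq


section Hom
variable (idem : ∀ x : A, x * x = x) (rrb : ∀ a b : A, a * b * a = b * a)
variable {c : A} (hc : ∀ x : A, c * x = x * c)
variable {I1 I2 : Set A}
variable (hperm' : ∀ x1 ∈ I1, ∀ x2 ∈ I2, x1 * x2 = x2 * x1)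
variable (hmod1 : ∀ x y : A, ∀ x1 ∈ I1, ∀ x2 ∈ I2, rle (x * c) (x1 * x2) →
    ∀ s : A, IsLub2 (x * x1) (x * x2) s →
      IsLub2 (x * x1 * y) (x * x2 * y) (s * y) ∧
      IsLub2 (y * x * x1) (y * x * x2) (y * s))
variable (hmod2 : ∀ x y : A, ∀ x1 ∈ I1, ∀ x2 ∈ I2, rle (x1 * x2) x →
    (∀ s : A, IsLub2 (x * x1) (c * x1) s →
      IsLub2 (x * x1 * y) (c * x1 * y) (s * y) ∧
      IsLub2 (y * x * x1) (y * c * x1) (y * s)) ∧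
    (∀ s : A, IsLub2 (x * x2) (c * x2) s →
      IsLub2 (x * x2 * y) (c * x2 * y) (s * y) ∧
      IsLub2 (y * x * x2) (y * c * x2) (y * s)))
variable (habs1 : ∀ x1 ∈ I1, ∀ y1 ∈ I1, ∀ z2 ∈ I2, ∀ s : A,
      (IsLub2 x1 (y1 * z2) s ↔ IsLub2 x1 (y1 * c) s))
variable (habs2 : ∀ x2 ∈ I2, ∀ y2 ∈ I2, ∀ z1 ∈ I1, ∀ s : A,
      (IsLub2 x2 (y2 * z1) s ↔ IsLub2 x2 (y2 * c) s))
variable (hmc1 : MulClosed I1) (hmc2 : MulClosed I2)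
variable (hcI1 : c ∈ I1) (hcI2 : c ∈ I2)
include idem rrb hc hperm' hmod1 hmod2 habs1 habs2 hmc1 hmc2 hcI1 hcI2

set_option maxHeartbeats 1600000 in
lemma hom_pair {x y x1 x2 y1 y2 : A}
    (h1 : x1 ∈ I1) (h2 : x2 ∈ I2) (hy1 : y1 ∈ I1) (hy2 : y2 ∈ I2)
    (hp : IsPair c x1 x2 x) (hq : IsPair c y1 y2 y) :
    IsPair c (x1 * y1) (x2 * y2) (x * y) := by
  have px := hperm' x1 h1 x2 h2
  have py := hperm' y1 hy1 y2 hy2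
  have p21 := hperm' y1 hy1 x2 h2
  have ma1x : ∀ t, t * x * x1 = x * t * x1 :=
    fun t => ma1 idem rrb hc hmod2 h1 h2 hp t
  have ma2x : ∀ t, t * x * x2 = x * t * x2 :=
    fun t => ma2 idem rrb hc hmod2 h1 h2 hp t
  have ma1y : ∀ t, t * y * y1 = y * t * y1 :=
    fun t => ma1 idem rrb hc hmod2 hy1 hy2 hq t
  have ma2y : ∀ t, t * y * y2 = y * t * y2 :=
    fun t => ma2 idem rrb hc hmod2 hy1 hy2 hq t
  have mb1x : ∀ t, t * x * x1 = x1 * (t * x) :=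
    fun t => mb1 idem rrb hc hmod1 h1 h2 hp t
  have mb2x : ∀ t, t * x * x2 = x2 * (t * x) :=
    fun t => mb2 idem rrb hc hmod1 h1 h2 hp t
  have mb1y : ∀ t, t * y * y1 = y1 * (t * y) :=
    fun t => mb1 idem rrb hc hmod1 hy1 hy2 hq t
  have mb2y : ∀ t, t * y * y2 = y2 * (t * y) :=
    fun t => mb2 idem rrb hc hmod1 hy1 hy2 hq t
  -- product identity
  have hprod : (x1*y1)*(x2*y2) = (x*y)*c := by
    calc (x1*y1)*(x2*y2) = ((x1*y1)*x2)*y2 := (mul_assoc ..).symm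
      _ = (x1*(y1*x2))*y2 := by rw [mul_assoc x1 y1 x2]
      _ = (x1*(x2*y1))*y2 := by rw [p21]
      _ = ((x1*x2)*y1)*y2 := by rw [← mul_assoc x1 x2 y1]
      _ = (x1*x2)*(y1*y2) := mul_assoc ..
      _ = (x*c)*(y*c) := by rw [hp.2.2.2.2, hq.2.2.2.2]
      _ = ((x*c)*y)*c := (mul_assoc ..).symm
      _ = (x*(c*y))*c := by rw [mul_assoc x c y]
      _ = (x*(y*c))*c := by rw [hc y]
      _ = ((x*y)*c)*c := by rw [← mul_assoc x y c]
      _ = (x*y)*(c*c) := mul_assoc ..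
      _ = (x*y)*c := by rw [idem]
  -- commutation, first component
  have hA : (x*y)*(x1*y1) = x*x1*y*y1 := by
    calc (x*y)*(x1*y1) = ((x*y)*x1)*y1 := (mul_assoc ..).symm
      _ = (y*x*x1)*y1 := by rw [ma1x y]
      _ = (y*(x*x1))*y1 := by rw [mul_assoc y x x1]
      _ = x*x1*y*y1 := (ma1y (x*x1)).symm
  have hA' : (x1*y1)*(x*y) = x*x1*y*y1 := by
    calc (x1*y1)*(x*y) = ((x1*y1)*x)*y := (mul_assoc ..).symm
      _ = (x1*(y1*x))*y := by rw [mul_assoc x1 y1 x]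
      _ = (y1*x*x1)*y := by rw [← mb1x y1]
      _ = (x*y1*x1)*y := by rw [ma1x y1]
      _ = (x*(y1*x1))*y := by rw [mul_assoc x y1 x1]
      _ = x*((y1*x1)*y) := mul_assoc ..
      _ = x*(y1*(x1*y)) := by rw [mul_assoc y1 x1 y]
      _ = x*(x1*y*y1) := by rw [← mb1y x1]
      _ = x*(x1*(y*y1)) := by rw [mul_assoc x1 y y1]
      _ = (x*x1)*(y*y1) := (mul_assoc ..).symm
      _ = x*x1*y*y1 := (mul_assoc ..).symm
  -- commutation, second component
  have hB : (x*y)*(x2*y2) = x*x2*y*y2 := by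
    calc (x*y)*(x2*y2) = ((x*y)*x2)*y2 := (mul_assoc ..).symm
      _ = (y*x*x2)*y2 := by rw [ma2x y]
      _ = (y*(x*x2))*y2 := by rw [mul_assoc y x x2]
      _ = x*x2*y*y2 := (ma2y (x*x2)).symm
  have hB' : (x2*y2)*(x*y) = x*x2*y*y2 := by
    calc (x2*y2)*(x*y) = ((x2*y2)*x)*y := (mul_assoc ..).symm
      _ = (x2*(y2*x))*y := by rw [mul_assoc x2 y2 x]
      _ = (y2*x*x2)*y := by rw [← mb2x y2]
      _ = (x*y2*x2)*y := by rw [ma2x y2]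
      _ = (x*(y2*x2))*y := by rw [mul_assoc x y2 x2]
      _ = x*((y2*x2)*y) := mul_assoc ..
      _ = x*(y2*(x2*y)) := by rw [mul_assoc y2 x2 y]
      _ = x*(x2*y*y2) := by rw [← mb2y x2]
      _ = x*(x2*(y*y2)) := by rw [mul_assoc x2 y y2]
      _ = (x*x2)*(y*y2) := (mul_assoc ..).symm
      _ = x*x2*y*y2 := (mul_assoc ..).symm
  -- distributivity
  have sub1 : IsLub2 (x*x1*y*y1) (x*x1*y*y2) (x*x1*y) :=
    (hmod1 y (x*x1) y1 hy1 y2 hy2 (pair_elig1 idem rrb hc hq) y hq.2.1).2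
  have sub2 : IsLub2 (x*x2*y*y1) (x*x2*y*y2) (x*x2*y) :=
    (hmod1 y (x*x2) y1 hy1 y2 hy2 (pair_elig1 idem rrb hc hq) y hq.2.1).2
  have main : IsLub2 (x*x1*y) (x*x2*y) (x*y) :=
    (hmod1 x y x1 h1 x2 h2 (pair_elig1 idem rrb hc hp) x hp.2.1).1
  have g12eq : x*x1*y*y2 = (x*x2*y*y2)*c := by
    calc x*x1*y*y2 = y*(x*x1)*y2 := ma2y (x*x1)
      _ = y*((x*x1)*y2) := mul_assoc ..
      _ = y*((x*c)*y2) := by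
            rw [tb2 idem rrb hc habs1 hmc1 hcI1 hp px h1 hy2]
      _ = (y*(x*c))*y2 := (mul_assoc ..).symm
      _ = (y*((x*x2)*c))*y2 := by rw [pair_exc2 idem rrb hc hp]
      _ = ((y*(x*x2))*c)*y2 := by rw [← mul_assoc y (x*x2) c]
      _ = (y*(x*x2))*(c*y2) := mul_assoc ..
      _ = (y*(x*x2))*(y2*c) := by rw [hc y2]
      _ = ((y*(x*x2))*y2)*c := (mul_assoc ..).symm
      _ = (x*x2*y*y2)*c := by rw [← ma2y (x*x2)]
  have g21eq : x*x2*y*y1 = (x*x1*y*y1)*c := by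
    calc x*x2*y*y1 = y*(x*x2)*y1 := ma1y (x*x2)
      _ = y*((x*x2)*y1) := mul_assoc ..
      _ = y*((x*c)*y1) := by
            rw [ta2 idem rrb hc habs2 hmc2 hcI2 hp h2 hy1]
      _ = (y*(x*c))*y1 := (mul_assoc ..).symm
      _ = (y*((x*x1)*c))*y1 := by rw [pair_exc1 idem rrb hc hp px]
      _ = ((y*(x*x1))*c)*y1 := by rw [← mul_assoc y (x*x1) c]
      _ = (y*(x*x1))*(c*y1) := mul_assoc ..
      _ = (y*(x*x1))*(y1*c) := by rw [hc y1]
      _ = ((y*(x*x1))*y1)*c := (mul_assoc ..).symm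
      _ = (x*x1*y*y1)*c := by rw [← ma1y (x*x1)]
  have rle12 : rle (x*x1*y*y2) (x*x2*y*y2) := by
    rw [g12eq]; exact rle_sc idem rrb hc _
  have rle21 : rle (x*x2*y*y1) (x*x1*y*y1) := by
    rw [g21eq]; exact rle_sc idem rrb hc _
  have hdist : IsLub2 (x*x1*y*y1) (x*x2*y*y2) (x*y) := by
    refine ⟨rle_trans idem rrb sub1.1 main.1,
            rle_trans idem rrb sub2.2.1 main.2.1, fun t hBt hB2t => ?_⟩
    exact main.2.2 t (sub1.2.2 t hBt (rle_trans idem rrb rle12 hB2t))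
      (sub2.2.2 t (rle_trans idem rrb rle21 hBt) hB2t)
  -- p1
  have hub1 : rle (x*x1*y*y1) (x1*y1) := by
    show (x*x1*y*y1)*(x1*y1) = x*x1*y*y1
    calc (x*x1*y*y1)*(x1*y1) = ((x*x1)*y)*(y1*(x1*y1)) := by
          rw [mul_assoc ((x*x1)*y) y1 (x1*y1)]
      _ = ((x*x1)*y)*(x1*y1) := by rw [m_tail idem rrb y1 x1]
      _ = (((x*x1)*y)*x1)*y1 := (mul_assoc ..).symm
      _ = ((x*x1)*(y*x1))*y1 := by rw [mul_assoc (x*x1) y x1]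
      _ = (x*(x1*(y*x1)))*y1 := by rw [mul_assoc x x1 (y*x1)]
      _ = (x*(y*x1))*y1 := by rw [m_tail idem rrb x1 y]
      _ = ((x*y)*x1)*y1 := by rw [← mul_assoc x y x1]
      _ = (x*y)*(x1*y1) := mul_assoc ..
      _ = x*x1*y*y1 := hA
  have hp1 : IsLub2 (x*x1*y*y1) (c*(x1*y1)) (x1*y1) := by
    refine ⟨hub1, ?_, fun t hBt hct => ?_⟩
    · show (c*(x1*y1))*(x1*y1) = c*(x1*y1)
      rw [mul_assoc, idem]
    · have subl := pc12 idem rrb hc hmod2 hy1 hy2 hq (x*x1)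
      rw [pair_exc1 idem rrb hc hp px] at subl
      have hle : rle ((x*c)*y1) (c*(x1*y1)) := by
        show ((x*c)*y1)*(c*(x1*y1)) = (x*c)*y1
        calc ((x*c)*y1)*(c*(x1*y1)) = ((x*c)*y1)*((x1*y1)*c) := by rw [hc (x1*y1)]
          _ = (((x*c)*y1)*(x1*y1))*c := (mul_assoc ..).symm
          _ = ((x*c)*(y1*(x1*y1)))*c := by rw [mul_assoc (x*c) y1 (x1*y1)]
          _ = ((x*c)*(x1*y1))*c := by rw [m_tail idem rrb y1 x1]
          _ = (((x*c)*x1)*y1)*c := by rw [← mul_assoc (x*c) x1 y1]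
          _ = ((x*c)*y1)*c := by rw [pair_e_x1 idem rrb hc hp px]
          _ = (x*c)*(y1*c) := mul_assoc ..
          _ = (x*c)*(c*y1) := by rw [hc y1]
          _ = ((x*c)*c)*y1 := (mul_assoc ..).symm
          _ = (x*c)*y1 := by rw [e_c idem rrb hc x]
      have h1le : rle ((x*x1)*y1) t := subl.2.2 t hBt (rle_trans idem rrb hle hct)
      have mainp1 := pc11 idem rrb hc hmod2 h1 h2 hp y1
      refine mainp1.2.2 t h1le ?_
      show (c*x1*y1)*t = c*x1*y1
      rw [mul_assoc c x1 y1]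
      exact hct
  -- p2
  have hub2 : rle (x*x2*y*y2) (x2*y2) := by
    show (x*x2*y*y2)*(x2*y2) = x*x2*y*y2
    calc (x*x2*y*y2)*(x2*y2) = ((x*x2)*y)*(y2*(x2*y2)) := by
          rw [mul_assoc ((x*x2)*y) y2 (x2*y2)]
      _ = ((x*x2)*y)*(x2*y2) := by rw [m_tail idem rrb y2 x2]
      _ = (((x*x2)*y)*x2)*y2 := (mul_assoc ..).symm
      _ = ((x*x2)*(y*x2))*y2 := by rw [mul_assoc (x*x2) y x2]
      _ = (x*(x2*(y*x2)))*y2 := by rw [mul_assoc x x2 (y*x2)]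
      _ = (x*(y*x2))*y2 := by rw [m_tail idem rrb x2 y]
      _ = ((x*y)*x2)*y2 := by rw [← mul_assoc x y x2]
      _ = (x*y)*(x2*y2) := mul_assoc ..
      _ = x*x2*y*y2 := hB
  have hp2 : IsLub2 (x*x2*y*y2) (c*(x2*y2)) (x2*y2) := by
    refine ⟨hub2, ?_, fun t hBt hct => ?_⟩
    · show (c*(x2*y2))*(x2*y2) = c*(x2*y2)
      rw [mul_assoc, idem]
    · have subl := pc22 idem rrb hc hmod2 hy1 hy2 hq (x*x2)
      rw [pair_exc2 idem rrb hc hp] at subl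
      have hle : rle ((x*c)*y2) (c*(x2*y2)) := by
        show ((x*c)*y2)*(c*(x2*y2)) = (x*c)*y2
        calc ((x*c)*y2)*(c*(x2*y2)) = ((x*c)*y2)*((x2*y2)*c) := by rw [hc (x2*y2)]
          _ = (((x*c)*y2)*(x2*y2))*c := (mul_assoc ..).symm
          _ = ((x*c)*(y2*(x2*y2)))*c := by rw [mul_assoc (x*c) y2 (x2*y2)]
          _ = ((x*c)*(x2*y2))*c := by rw [m_tail idem rrb y2 x2]
          _ = (((x*c)*x2)*y2)*c := by rw [← mul_assoc (x*c) x2 y2]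
          _ = ((x*c)*y2)*c := by rw [pair_e_x2 idem rrb hc hp]
          _ = (x*c)*(y2*c) := mul_assoc ..
          _ = (x*c)*(c*y2) := by rw [hc y2]
          _ = ((x*c)*c)*y2 := (mul_assoc ..).symm
          _ = (x*c)*y2 := by rw [e_c idem rrb hc x]
      have h2le : rle ((x*x2)*y2) t := subl.2.2 t hBt (rle_trans idem rrb hle hct)
      have mainp2 := pc21 idem rrb hc hmod2 h1 h2 hp y2
      refine mainp2.2.2 t h2le ?_
      show (c*x2*y2)*t = c*x2*y2
      rw [mul_assoc c x2 y2]
      exact hct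
  refine ⟨⟨hA.trans hA'.symm, hB.trans hB'.symm⟩, ?_, ?_, ?_, hprod⟩
  · rw [hA, hB]; exact hdist
  · rw [hA]; exact hp1
  · rw [hB]; exact hp2

end Hom


section Converse
variable (idem : ∀ x : A, x * x = x) (rrb : ∀ a b : A, a * b * a = b * a)
variable {c : A} (hc : ∀ x : A, c * x = x * c)
include idem rrb hc

set_option maxHeartbeats 1600000 in
/-- key lemma for the converse: the second projection of the pairing is
θ-related to the element itself. -/
lemma cfc_key (θ δ : A → A → Prop)
    (hEθ : Equivalence θ) (hEδ : Equivalence δ)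
    (hcongθ : ∀ a b a' b' : A, θ a b → θ a' b' → θ (a * a') (b * b'))
    (hcongδ : ∀ a b a' b' : A, δ a b → δ a' b' → δ (a * a') (b * b'))
    (huniq : ∀ a b : A, θ a b → δ a b → a = b)
    (hwit : ∀ a b : A, ∃ u, θ a u ∧ δ u b)
    {x p q : A}
    (hpθ : θ p c) (hqδ : δ q c)
    (hcomm1 : x * p = p * x) (hcomm2 : x * q = q * x)
    (hdist : IsLub2 (x * p) (x * q) x)
    (hp2 : IsLub2 (x * q) (c * q) q)
    (hcq : θ (c * q) (x * c)) : θ x q := by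
  obtain ⟨r, hxr, hrc⟩ := hwit x c
  have hqc : δ (c * q) c := by
    have h := hcongδ c c q c (hEδ.refl c) hqδ
    rwa [idem c] at h
  have hrcc : δ (r * c) c := by
    have h := hcongδ r c c c hrc (hEδ.refl c)
    rwa [idem c] at h
  have hcqrc : c * q = r * c :=
    huniq _ _ (hEθ.trans hcq (hcongθ x r c c hxr (hEθ.refl c)))
      (hEδ.trans hqc (hEδ.symm hrcc))
  -- K1 : q is the lub of (r*q, c*q)
  have K1 : IsLub2 (r * q) (c * q) q := by
    refine ⟨?_, ?_, fun t h1 h2 => ?_⟩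
    · show (r*q)*q = r*q; rw [mul_assoc, idem]
    · show (c*q)*q = c*q; rw [mul_assoc, idem]
    · refine hp2.2.2 t ?_ h2
      show (x*q)*t = x*q
      refine huniq _ _ ?_ ?_
      · have h := hcongθ (x*q) (r*q) t t (hcongθ x r q q hxr (hEθ.refl q)) (hEθ.refl t)
        rw [h1] at h
        exact hEθ.trans h (hcongθ r x q q (hEθ.symm hxr) (hEθ.refl q))
      · have hbase : δ ((x*q)*t) ((x*c)*t) :=
          hcongδ (x*q) (x*c) t t (hcongδ x x q c (hEδ.refl x) hqδ) (hEδ.refl t)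
        have hct : δ (c*t) c := by
          have h := hcongδ (c*c) (c*q) t t (hcongδ c c c q (hEδ.refl c) (hEδ.symm hqδ)) (hEδ.refl t)
          rw [idem c, h2] at h
          exact hEδ.trans h hqc
        have h2' : δ ((x*c)*t) (x*c) := by
          rw [mul_assoc]
          have := hcongδ x x (c*t) c (hEδ.refl x) hct
          exact this
        have hq' : δ (x*q) (x*c) := hcongδ x x q c (hEδ.refl x) hqδ
        exact hEδ.trans (hEδ.trans hbase h2') (hEδ.symm hq')
  -- K2 : r is the lub of (r*c, r*q)
  have K2 : IsLub2 (r * c) (r * q) r := by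
    refine ⟨rle_sc idem rrb hc r, ?_, fun t h1 h2 => ?_⟩
    · show (r*q)*r = r*q
      refine huniq _ _ ?_ ?_
      · have h := hcongθ (r*q) (x*q) r x (hcongθ r x q q (hEθ.symm hxr) (hEθ.refl q)) (hEθ.symm hxr)
        have hxqx : (x*q)*x = x*q := by
          rw [mul_assoc, ← hcomm2, ← mul_assoc, idem]
        rw [hxqx] at h
        exact hEθ.trans h (hcongθ x r q q hxr (hEθ.refl q))
      · have h := hcongδ (r*q) (c*q) r c (hcongδ r c q q hrc (hEδ.refl q)) hrc
        have hcqc : (c*q)*c = c*q := by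
          rw [mul_assoc, ← hc q, ← mul_assoc, idem]
        rw [hcqc] at h
        exact hEδ.trans h (hcongδ c r q q (hEδ.symm hrc) (hEδ.refl q))
    · show r*t = r
      refine huniq _ _ ?_ ?_
      · -- θ side via a pullback
        obtain ⟨t', htt', ht'x⟩ := hwit t x
        have hxq' : rle (x*q) t' := by
          show (x*q)*t' = x*q
          refine huniq _ _ ?_ ?_
          · have h := hcongθ (x*q) (r*q) t' t (hcongθ x r q q hxr (hEθ.refl q)) (hEθ.symm htt')
            rw [h2] at h
            exact hEθ.trans h (hcongθ r x q q (hEθ.symm hxr) (hEθ.refl q))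
          · have h := hcongδ (x*q) (x*q) t' x (hEδ.refl (x*q)) ht'x
            have : (x*q)*x = x*q := by rw [mul_assoc, ← hcomm2, ← mul_assoc, idem]
            rwa [this] at h
        have hxp' : rle (x*p) t' := by
          show (x*p)*t' = x*p
          refine huniq _ _ ?_ ?_
          · have h := hcongθ (x*p) (x*c) t' t (hcongθ x x p c (hEθ.refl x) hpθ) (hEθ.symm htt')
            have h2' : θ ((x*c)*t) (x*c) := by
              have hh := hcongθ (x*c) (r*c) t t (hcongθ x r c c hxr (hEθ.refl c)) (hEθ.refl t)
              rw [h1] at hh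
              exact hEθ.trans hh (hcongθ r x c c (hEθ.symm hxr) (hEθ.refl c))
            have hp' : θ (x*p) (x*c) := hcongθ x x p c (hEθ.refl x) hpθ
            exact hEθ.trans (hEθ.trans h h2') (hEθ.symm hp')
          · have h := hcongδ (x*p) (x*p) t' x (hEδ.refl (x*p)) ht'x
            have : (x*p)*x = x*p := by rw [mul_assoc, ← hcomm1, ← mul_assoc, idem]
            rwa [this] at h
        have hxt' : x*t' = x := hdist.2.2 t' hxp' hxq'
        have h := hcongθ r x t t (hEθ.symm hxr) (hEθ.refl t)
        have h' := hcongθ x x t t' (hEθ.refl x) htt'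
        rw [hxt'] at h'
        exact hEθ.trans h (hEθ.trans h' hxr)
      · -- δ side
        have hct2 : δ (c*t) c := by
          have h := hcongδ (c*c) (r*c) t t (hcongδ c r c c (hEδ.symm hrc) (hEδ.refl c)) (hEδ.refl t)
          rw [idem c, h1] at h
          exact hEδ.trans h hrcc
        have h := hcongδ r c t t hrc (hEδ.refl t)
        exact hEδ.trans (hEδ.trans h hct2) (hEδ.symm hrc)
  have hqr : q = r := by
    rw [hcqrc] at K1
    exact lub_unique idem rrb K1 (lub_symm idem rrb K2)
  rw [hqr]
  exact hxr

end Converse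

end Aux

end RRBFactor

/-- The bijective correspondence between `c`-direct product decompositions and
pairs of complementary factor congruences of a right regular band `A` with a
central element `c`.

Forward direction: if `A = I1 ×_c I2` and `π1`, `π2` are the projections
determined by `x = ⟨⟨π1 x, π2 x⟩⟩_c`, then `ker π2` and `ker π1` are
complementary factor congruences and `I_{ker π2} = I1`, `I_{ker π1} = I2`.

Converse: if `θ`, `δ` are complementary factor congruences and `π1`, `π2` are
the projections associated with the decomposition `A = I_θ ×_c I_δ`, then
`ker π2 = θ` and `ker π1 = δ`. -/
theorem rrb_factor_congruence_correspondence {A : Type*} [Semigroup A]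
    (idem : ∀ x : A, x * x = x) (rrb : ∀ a b : A, a * b * a = b * a)
    (c : A) (hc : ∀ x : A, c * x = x * c) :
    (∀ (I1 I2 : Set A), MulClosed I1 → MulClosed I2 → CDirect c I1 I2 →
      ∀ π1 π2 : A → A,
        (∀ x : A, π1 x ∈ I1 ∧ π2 x ∈ I2 ∧ IsPair c (π1 x) (π2 x) x) →
        (CompFactorCong (fun x y : A => π2 x = π2 y) (fun x y : A => π1 x = π1 y) ∧
          {a : A | π2 a = π2 c} = I1 ∧ {a : A | π1 a = π1 c} = I2)) ∧
    (∀ θ δ : A → A → Prop, CompFactorCong θ δ →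
      ∀ π1 π2 : A → A,
        (∀ x : A, π1 x ∈ {a : A | θ a c} ∧ π2 x ∈ {a : A | δ a c} ∧
          IsPair c (π1 x) (π2 x) x) →
        ((∀ x y : A, π2 x = π2 y ↔ θ x y) ∧ (∀ x y : A, π1 x = π1 y ↔ δ x y))) := by
  constructor
  · -- forward direction
    intro I1 I2 hmc1 hmc2 hCD π1 π2 H
    obtain ⟨hperm', hmod1, hmod2, habs1, habs2, hexi, honto⟩ := hCD
    -- the pair of c is (c, c), so c belongs to both factors
    have hcc := c_components idem rrb hc (H c).2.2
      (hperm' (π1 c) (H c).1 (π2 c) (H c).2.1)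
    have hcI1 : c ∈ I1 := hcc.1 ▸ (H c).1
    have hcI2 : c ∈ I2 := hcc.2 ▸ (H c).2.1
    -- uniqueness of components
    have CU : ∀ {x x1 x2 : A}, x1 ∈ I1 → x2 ∈ I2 → IsPair c x1 x2 x →
        x1 = π1 x ∧ x2 = π2 x := by
      intro x x1 x2 h1 h2 hp
      exact comp_uniq idem rrb hc hperm' hmod1 hmod2 habs1 habs2 hmc1 hmc2
        hcI1 hcI2 h1 h2 (H x).1 (H x).2.1 hp (H x).2.2
    -- the projections are homomorphisms
    have hom : ∀ u v : A, π1 (u*v) = π1 u * π1 v ∧ π2 (u*v) = π2 u * π2 v := by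
      intro u v
      have h := hom_pair idem rrb hc hperm' hmod1 hmod2 habs1 habs2 hmc1 hmc2
        hcI1 hcI2 (H u).1 (H u).2.1 (H v).1 (H v).2.1 (H u).2.2 (H v).2.2
      have h2 := CU (hmc1 _ (H u).1 _ (H v).1) (hmc2 _ (H u).2.1 _ (H v).2.1) h
      exact ⟨h2.1.symm, h2.2.symm⟩
    -- injectivity of the pairing
    have XU : ∀ {a b : A}, π1 a = π1 b → π2 a = π2 b → a = b := by
      intro a b h1 h2
      have hpb := (H b).2.2
      rw [← h1, ← h2] at hpb
      exact x_uniq idem rrb hc hperm' hmod2 (H a).1 (H a).2.1 (H a).2.2 hpb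
    refine ⟨⟨⟨⟨fun _ => rfl, Eq.symm, Eq.trans⟩, ?_⟩,
             ⟨⟨fun _ => rfl, Eq.symm, Eq.trans⟩, ?_⟩, ?_, ?_⟩, ?_, ?_⟩
    · intro a b a' b' h h'
      rw [(hom a a').2, (hom b b').2, h, h']
    · intro a b a' b' h h'
      rw [(hom a a').1, (hom b b').1, h, h']
    · intro a b h h'
      exact XU h' h
    · intro a b
      constructor
      · obtain ⟨u, hu⟩ := hexi (π1 b) (H b).1 (π2 a) (H a).2.1
        have h := CU (H b).1 (H a).2.1 hu
        exact ⟨u, h.2, h.1.symm⟩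
      · obtain ⟨v, hv⟩ := hexi (π1 a) (H a).1 (π2 b) (H b).2.1
        have h := CU (H a).1 (H b).2.1 hv
        exact ⟨v, h.1, h.2.symm⟩
    · ext a
      simp only [Set.mem_setOf_eq]
      constructor
      · intro h
        rw [hcc.2] at h
        have hpa : IsPair c (π1 a) c a := by
          have hx := (H a).2.2
          rwa [h] at hx
        have : a = π1 a := x_uniq idem rrb hc hperm' hmod2 (H a).1 hcI2 hpa
          (pair_I1 idem rrb hc (π1 a))
        rw [this]; exact (H a).1
      · intro ha
        have h := CU ha hcI2 (pair_I1 idem rrb hc a)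
        rw [← h.2, hcc.2]
    · ext a
      simp only [Set.mem_setOf_eq]
      constructor
      · intro h
        rw [hcc.1] at h
        have hpa : IsPair c c (π2 a) a := by
          have hx := (H a).2.2
          rwa [h] at hx
        have : a = π2 a := x_uniq idem rrb hc hperm' hmod2 hcI1 (H a).2.1 hpa
          (pair_I2 idem rrb hc (π2 a))
        rw [this]; exact (H a).2.1
      · intro ha
        have h := CU hcI1 ha (pair_I2 idem rrb hc a)
        rw [← h.1, hcc.1]
  · -- converse direction
    intro θ δ hcfc π1 π2 H
    obtain ⟨⟨hEθ, hcongθ⟩, ⟨hEδ, hcongδ⟩, huniq, hcomp⟩ := hcfc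
    have key1 : ∀ x : A, θ x (π2 x) := by
      intro x
      have hpair := (H x).2.2
      have hcq : θ (c * π2 x) (x * c) := by
        have h := hcongθ c (π1 x) (π2 x) (π2 x) (hEθ.symm (H x).1) (hEθ.refl _)
        rwa [hpair.2.2.2.2] at h
      exact cfc_key idem rrb hc θ δ hEθ hEδ hcongθ hcongδ huniq
        (fun a b => (hcomp a b).1) (H x).1 (H x).2.1
        hpair.1.1 hpair.1.2 hpair.2.1 hpair.2.2.2.1 hcq
    have key2 : ∀ x : A, δ x (π1 x) := by
      intro x
      have hpair := (H x).2.2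
      have hcq : δ (c * π1 x) (x * c) := by
        have h := hcongδ (π1 x) (π1 x) c (π2 x) (hEδ.refl _) (hEδ.symm (H x).2.1)
        rw [hpair.2.2.2.2] at h
        rwa [hc (π1 x)]
      exact cfc_key idem rrb hc δ θ hEδ hEθ hcongδ hcongθ
        (fun a b h h' => huniq a b h' h)
        (fun a b => (hcomp a b).2) (H x).2.1 (H x).1
        hpair.1.2 hpair.1.1 (lub_symm idem rrb hpair.2.1) hpair.2.2.1 hcq
    constructor
    · intro x y
      constructor
      · intro h
        have h1 := key1 x
        rw [h] at h1
        exact hEθ.trans h1 (hEθ.symm (key1 y))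
      · intro h
        refine huniq _ _ ?_ ?_
        · exact hEθ.trans (hEθ.symm (key1 x)) (hEθ.trans h (key1 y))
        · exact hEδ.trans (H x).2.1 (hEδ.symm (H y).2.1)
    · intro x y
      constructor
      · intro h
        have h1 := key2 x
        rw [h] at h1
        exact hEδ.trans h1 (hEδ.symm (key2 y))
      · intro h
        refine huniq _ _ ?_ ?_
        · exact hEθ.trans (H x).1 (hEθ.symm (H y).1)
        · exact hEδ.trans (hEδ.symm (key2 x)) (hEδ.trans h (key2 y))
end
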